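/- arXiv:1602.03828 — 6 statements merged into one kernel-verified Lean document; each statement's English description precedes it below -/
import Mathlib

section
/- Fix any p with 0 < p < 1/2. For each integer L ≥ 2 let P_0 = (1−p)·Binomial(L−1, p) + p·Binomial(L−1, 1−p) and P_1 = p·Binomial(L−1, p) + (1−p)·Binomial(L−1, 1−p) be mixture distributions on {0,1,…,L−1}, and let D(P_0,P_1) denote the Chernoff information between P_0 and P_1. Then lim_{L→∞} D(P_0,P_1) = KL(0.5‖p) = 0.5·log(0.5/p) + 0.5·log(0.5/(1−p)). -/
open Filter

noncomputable section
attribute [local instance] Classical.propDecidable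

/-- KL divergence between Bernoulli(1/2) and Bernoulli(θ):
`KL(0.5‖θ) = 0.5·log(0.5/θ) + 0.5·log(0.5/(1−θ))`. -/
def KLhalf (θ : ℝ) : ℝ := 0.5 * Real.log (0.5 / θ) + 0.5 * Real.log (0.5 / (1 - θ))

/-- Poisson probability mass function with mean `μ`. -/
def poissonP (μ : ℝ) (k : ℕ) : ℝ := Real.exp (-μ) * μ ^ k / (Nat.factorial k)

/-- Chernoff information between two distributions on a finite alphabet:
`D(P₀,P₁) = −inf_{0 ≤ τ ≤ 1} log Σ_y P₀(y)^τ P₁(y)^{1−τ}`. -/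
def chernoffInfo {α : Type*} [Fintype α] (P0 P1 : α → ℝ) : ℝ :=
  - sInf ((fun τ : ℝ => Real.log (∑ y, P0 y ^ τ * P1 y ^ (1 - τ))) '' Set.Icc 0 1)

/-- `P₀ = (1−p)·Binomial(L−1,p) + p·Binomial(L−1,1−p)`, as a mass function on `{0,…,L−1}`:
`P₀(i) = C(L−1,i)·(p^i (1−p)^{L−i} + (1−p)^i p^{L−i})`. -/
def Pmix0 (L : ℕ) (p : ℝ) : Fin L → ℝ := fun i =>
  ((L-1).choose i : ℝ) *
    (p ^ (i:ℕ) * (1-p) ^ (L - (i:ℕ)) + (1-p) ^ (i:ℕ) * p ^ (L - (i:ℕ)))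

/-- `P₁ = p·Binomial(L−1,p) + (1−p)·Binomial(L−1,1−p)`, as a mass function on `{0,…,L−1}`:
`P₁(i) = C(L−1,i)·(p^{i+1} (1−p)^{L−i−1} + (1−p)^{i+1} p^{L−i−1})`. -/
def Pmix1 (L : ℕ) (p : ℝ) : Fin L → ℝ := fun i =>
  ((L-1).choose i : ℝ) *
    (p ^ ((i:ℕ)+1) * (1-p) ^ (L - (i:ℕ) - 1) + (1-p) ^ ((i:ℕ)+1) * p ^ (L - (i:ℕ) - 1))

namespace ChernoffAux

open Real Finset

variable {p : ℝ}

lemma choose_pos' {L : ℕ} (i : Fin L) : 0 < (((L-1).choose i : ℕ) : ℝ) := by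
  have hi := i.isLt
  have : (i:ℕ) ≤ L - 1 := by omega
  exact_mod_cast Nat.choose_pos this

lemma Pmix0_pos (hp0 : 0 < p) (hp1 : p < 1) {L : ℕ} (i : Fin L) : 0 < Pmix0 L p i := by
  have h1 : 0 < 1 - p := by linarith
  have hc := choose_pos' i
  unfold Pmix0
  positivity

lemma Pmix1_pos (hp0 : 0 < p) (hp1 : p < 1) {L : ℕ} (i : Fin L) : 0 < Pmix1 L p i := by
  have h1 : 0 < 1 - p := by linarith
  have hc := choose_pos' i
  unfold Pmix1
  positivity

lemma Pmix0_rev (p : ℝ) {L : ℕ} (i : Fin L) : Pmix0 L p (Fin.rev i) = Pmix1 L p i := by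
  have hi := i.isLt
  unfold Pmix0 Pmix1
  rw [Fin.val_rev]
  rw [show L - (L - ((i:ℕ)+1)) = (i:ℕ) + 1 from by omega,
      show L - ((i:ℕ)+1) = L - (i:ℕ) - 1 from by omega,
      show (L-1).choose (L - (i:ℕ) - 1) = (L-1).choose i from by
        rw [show L - (i:ℕ) - 1 = (L-1) - (i:ℕ) from by omega]
        exact Nat.choose_symm (by omega)]
  ring

lemma Pmix1_rev (p : ℝ) {L : ℕ} (i : Fin L) : Pmix1 L p (Fin.rev i) = Pmix0 L p i := by
  have hi := i.isLt
  unfold Pmix0 Pmix1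
  rw [Fin.val_rev]
  rw [show L - (L - ((i:ℕ)+1)) - 1 = (i:ℕ) from by omega,
      show L - ((i:ℕ)+1) + 1 = L - (i:ℕ) from by omega,
      show (L-1).choose (L - ((i:ℕ)+1)) = (L-1).choose i from by
        rw [show L - ((i:ℕ)+1) = (L-1) - (i:ℕ) from by omega]
        exact Nat.choose_symm (by omega)]
  ring

/-- AM-GM for rpow. -/
lemma amgm_rpow {x y : ℝ} (hx : 0 < x) (hy : 0 < y) (τ : ℝ) :
    2 * Real.sqrt (x * y) ≤ x ^ τ * y ^ (1-τ) + y ^ τ * x ^ (1-τ) := by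
  set u := x ^ τ * y ^ (1-τ) with hu
  set v := y ^ τ * x ^ (1-τ) with hv
  have hupos : 0 < u := by positivity
  have hvpos : 0 < v := by positivity
  have huv : u * v = x * y := by
    rw [hu, hv, show x ^ τ * y ^ (1-τ) * (y ^ τ * x ^ (1-τ))
        = (x ^ τ * x ^ (1-τ)) * (y ^ τ * y ^ (1-τ)) from by ring,
      ← Real.rpow_add hx, ← Real.rpow_add hy,
      show τ + (1 - τ) = 1 from by ring, Real.rpow_one, Real.rpow_one]
  rw [← huv, Real.sqrt_mul hupos.le]
  nlinarith [Real.sq_sqrt hupos.le, Real.sq_sqrt hvpos.le, sq_nonneg (Real.sqrt u - Real.sqrt v),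
    Real.sqrt_nonneg u, Real.sqrt_nonneg v]

lemma sqrt_add_le' {u v : ℝ} (hu : 0 ≤ u) (hv : 0 ≤ v) :
    Real.sqrt (u + v) ≤ Real.sqrt u + Real.sqrt v := by
  have h : u + v ≤ (Real.sqrt u + Real.sqrt v)^2 := by
    nlinarith [Real.sq_sqrt hu, Real.sq_sqrt hv, Real.sqrt_nonneg u, Real.sqrt_nonneg v]
  calc Real.sqrt (u+v) ≤ Real.sqrt ((Real.sqrt u + Real.sqrt v)^2) := Real.sqrt_le_sqrt h
    _ = _ := Real.sqrt_sq (by positivity)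

lemma sum_C_ab (x y : ℝ) (n : ℕ) :
    ∑ i : Fin (n+1), (n.choose (i:ℕ) : ℝ) * (x ^ (i:ℕ) * y ^ (n-(i:ℕ))) = (x+y)^n := by
  rw [Fin.sum_univ_eq_sum_range (fun i => (n.choose i : ℝ) * (x^i * y^(n-i))) (n+1), add_pow]
  exact Finset.sum_congr rfl fun i _ => by ring

lemma sum_C (n : ℕ) : ∑ i : Fin (n+1), ((n.choose (i:ℕ) : ℕ) : ℝ) = 2^n := by
  rw [Fin.sum_univ_eq_sum_range (fun i => ((n.choose i : ℕ) : ℝ)) (n+1)]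
  exact_mod_cast congrArg (Nat.cast : ℕ → ℝ) (Nat.sum_range_choose n)

/-- Product structure of the two mixtures. -/
lemma prod_formula (p : ℝ) (n : ℕ) (i : Fin (n+1)) :
    Pmix0 (n+1) p i * Pmix1 (n+1) p i
      = ((n.choose (i:ℕ) : ℝ))^2 *
        ((p*(1-p)) * (p ^ (i:ℕ) * (1-p) ^ (n-(i:ℕ)) + (1-p) ^ (i:ℕ) * p ^ (n-(i:ℕ)))^2
          + (1-2*p)^2 * (p*(1-p))^n) := by
  have hi : (i:ℕ) ≤ n := by have := i.isLt; omega
  have hab : (p ^ (i:ℕ) * (1-p) ^ (n-(i:ℕ))) * ((1-p) ^ (i:ℕ) * p ^ (n-(i:ℕ)))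
      = (p*(1-p))^n := by
    rw [show p ^ (i:ℕ) * (1-p) ^ (n-(i:ℕ)) * ((1-p) ^ (i:ℕ) * p ^ (n-(i:ℕ)))
        = (p ^ (i:ℕ) * p ^ (n-(i:ℕ))) * ((1-p) ^ (i:ℕ) * (1-p) ^ (n-(i:ℕ))) from by ring,
      ← pow_add, ← pow_add, show (i:ℕ) + (n - (i:ℕ)) = n from by omega, mul_pow]
  have h0 : Pmix0 (n+1) p i
      = (n.choose (i:ℕ) : ℝ) * ((1-p) * (p ^ (i:ℕ) * (1-p) ^ (n-(i:ℕ)))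
          + p * ((1-p) ^ (i:ℕ) * p ^ (n-(i:ℕ)))) := by
    unfold Pmix0
    rw [show (n+1) - 1 = n from rfl, show n + 1 - (i:ℕ) = (n - (i:ℕ)) + 1 from by omega]
    ring
  have h1 : Pmix1 (n+1) p i
      = (n.choose (i:ℕ) : ℝ) * (p * (p ^ (i:ℕ) * (1-p) ^ (n-(i:ℕ)))
          + (1-p) * ((1-p) ^ (i:ℕ) * p ^ (n-(i:ℕ)))) := by
    unfold Pmix1
    rw [show (n+1) - 1 = n from rfl, show n + 1 - (i:ℕ) - 1 = n - (i:ℕ) from by omega]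
    ring
  rw [h0, h1, ← hab]
  ring

/-- The Bhattacharyya sum is squeezed between `2√(p(1-p))` and `2√(p(1-p)) + (2√(p(1-p)))^n`. -/
lemma S_bounds (hp0 : 0 < p) (hp2 : p < 1/2) (n : ℕ) :
    2*Real.sqrt (p*(1-p)) ≤ (∑ i : Fin (n+1), Real.sqrt (Pmix0 (n+1) p i * Pmix1 (n+1) p i)) ∧
    (∑ i : Fin (n+1), Real.sqrt (Pmix0 (n+1) p i * Pmix1 (n+1) p i))
      ≤ 2*Real.sqrt (p*(1-p)) + (2*Real.sqrt (p*(1-p)))^n := by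
  have hp1 : p < 1 := by linarith
  have h1p : 0 < 1 - p := by linarith
  set q : ℝ := Real.sqrt (p*(1-p)) with hqdef
  have hqpos : 0 < q := Real.sqrt_pos.2 (by positivity)
  have hq2 : q^2 = p*(1-p) := Real.sq_sqrt (by positivity)
  set a : Fin (n+1) → ℝ := fun i => p ^ (i:ℕ) * (1-p) ^ (n-(i:ℕ)) with hadef
  set b : Fin (n+1) → ℝ := fun i => (1-p) ^ (i:ℕ) * p ^ (n-(i:ℕ)) with hbdef
  have hapos : ∀ i, 0 < a i := fun i => by simp only [hadef]; positivity
  have hbpos : ∀ i, 0 < b i := fun i => by simp only [hbdef]; positivity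
  have hprod : ∀ i : Fin (n+1), Pmix0 (n+1) p i * Pmix1 (n+1) p i
      = ((n.choose (i:ℕ) : ℝ) * q * (a i + b i))^2
        + ((n.choose (i:ℕ) : ℝ) * (1-2*p) * q^n)^2 := by
    intro i
    rw [prod_formula p n i]
    have hqn : (q^n)^2 = (p*(1-p))^n := by rw [← pow_mul, mul_comm n 2, pow_mul, hq2]
    rw [show ((n.choose (i:ℕ) : ℝ) * q * (a i + b i))^2
        = ((n.choose (i:ℕ) : ℝ))^2 * (q^2 * (a i + b i)^2) from by ring, hq2]
    rw [show ((n.choose (i:ℕ) : ℝ) * (1-2*p) * q^n)^2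
        = ((n.choose (i:ℕ) : ℝ))^2 * ((1-2*p)^2 * (q^n)^2) from by ring, hqn]
    ring
  have hC : ∀ i : Fin (n+1), (0:ℝ) ≤ (n.choose (i:ℕ) : ℝ) := fun i => by positivity
  -- per-index bounds
  have hlow : ∀ i : Fin (n+1),
      (n.choose (i:ℕ) : ℝ) * (q * (a i + b i)) ≤ Real.sqrt (Pmix0 (n+1) p i * Pmix1 (n+1) p i) := by
    intro i
    have hnn : 0 ≤ Pmix0 (n+1) p i * Pmix1 (n+1) p i := by
      rw [hprod i]; positivity
    rw [Real.le_sqrt (by positivity) hnn, hprod i]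
    nlinarith [sq_nonneg ((n.choose (i:ℕ) : ℝ) * (1-2*p) * q^n)]
  have hup : ∀ i : Fin (n+1),
      Real.sqrt (Pmix0 (n+1) p i * Pmix1 (n+1) p i)
        ≤ (n.choose (i:ℕ) : ℝ) * (q * (a i + b i)) + (n.choose (i:ℕ) : ℝ) * q^n := by
    intro i
    rw [hprod i]
    calc Real.sqrt (((n.choose (i:ℕ) : ℝ) * q * (a i + b i))^2
            + ((n.choose (i:ℕ) : ℝ) * (1-2*p) * q^n)^2)
        ≤ Real.sqrt (((n.choose (i:ℕ) : ℝ) * q * (a i + b i))^2)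
          + Real.sqrt (((n.choose (i:ℕ) : ℝ) * (1-2*p) * q^n)^2) :=
          sqrt_add_le' (sq_nonneg _) (sq_nonneg _)
      _ = (n.choose (i:ℕ) : ℝ) * q * (a i + b i) + (n.choose (i:ℕ) : ℝ) * (1-2*p) * q^n := by
          rw [Real.sqrt_sq (by positivity),
            Real.sqrt_sq (mul_nonneg (mul_nonneg (hC i) (by linarith)) (by positivity))]
      _ ≤ (n.choose (i:ℕ) : ℝ) * (q * (a i + b i)) + (n.choose (i:ℕ) : ℝ) * q^n := by
          have h2p : 1 - 2*p ≤ 1 := by linarith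
          have : (n.choose (i:ℕ) : ℝ) * (1-2*p) * q^n ≤ (n.choose (i:ℕ) : ℝ) * q^n := by
            have hqn : (0:ℝ) ≤ q^n := by positivity
            have hcq : 0 ≤ (n.choose (i:ℕ):ℝ) * q^n := mul_nonneg (hC i) hqn
            nlinarith [mul_nonneg hcq hp0.le]
          linarith [this, le_of_eq (mul_assoc ((n.choose (i:ℕ) : ℝ)) q (a i + b i))]
  -- sums
  have hsa : ∑ i : Fin (n+1), (n.choose (i:ℕ) : ℝ) * a i = 1 := by
    rw [hadef, sum_C_ab p (1-p) n]; norm_num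
  have hsb : ∑ i : Fin (n+1), (n.choose (i:ℕ) : ℝ) * b i = 1 := by
    rw [hbdef, sum_C_ab (1-p) p n]; norm_num
  have hsum_low : ∑ i : Fin (n+1), (n.choose (i:ℕ) : ℝ) * (q * (a i + b i)) = 2*q := by
    have : ∀ i : Fin (n+1), (n.choose (i:ℕ) : ℝ) * (q * (a i + b i))
        = q * ((n.choose (i:ℕ) : ℝ) * a i) + q * ((n.choose (i:ℕ) : ℝ) * b i) := fun i => by ring
    rw [Finset.sum_congr rfl fun i _ => this i, Finset.sum_add_distrib,
      ← Finset.mul_sum, ← Finset.mul_sum, hsa, hsb]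
    ring
  have hsum_C : ∑ i : Fin (n+1), (n.choose (i:ℕ) : ℝ) * q^n = (2*q)^n := by
    rw [← Finset.sum_mul, sum_C n, mul_pow]
  constructor
  · calc 2*q = ∑ i : Fin (n+1), (n.choose (i:ℕ) : ℝ) * (q * (a i + b i)) := hsum_low.symm
      _ ≤ _ := Finset.sum_le_sum fun i _ => hlow i
  · calc (∑ i : Fin (n+1), Real.sqrt (Pmix0 (n+1) p i * Pmix1 (n+1) p i))
        ≤ ∑ i : Fin (n+1), ((n.choose (i:ℕ) : ℝ) * (q * (a i + b i)) + (n.choose (i:ℕ) : ℝ) * q^n) :=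
          Finset.sum_le_sum fun i _ => hup i
      _ = 2*q + (2*q)^n := by rw [Finset.sum_add_distrib, hsum_low, hsum_C]

/-- Evaluation of the Chernoff information: the inf is attained at `τ = 1/2`. -/
lemma chernoff_eval (hp0 : 0 < p) (hp1 : p < 1) (n : ℕ) :
    chernoffInfo (Pmix0 (n+1) p) (Pmix1 (n+1) p)
      = - Real.log (∑ i : Fin (n+1), Real.sqrt (Pmix0 (n+1) p i * Pmix1 (n+1) p i)) := by
  set S : ℝ := ∑ i : Fin (n+1), Real.sqrt (Pmix0 (n+1) p i * Pmix1 (n+1) p i) with hSdef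
  have hSpos : 0 < S :=
    Finset.sum_pos (fun i _ => Real.sqrt_pos.2 (mul_pos (Pmix0_pos hp0 hp1 i) (Pmix1_pos hp0 hp1 i)))
      ⟨0, Finset.mem_univ 0⟩
  have hg_half : (∑ i : Fin (n+1), Pmix0 (n+1) p i ^ ((1:ℝ)/2) * Pmix1 (n+1) p i ^ (1 - (1:ℝ)/2)) = S := by
    refine Finset.sum_congr rfl fun i _ => ?_
    rw [show (1:ℝ) - 1/2 = 1/2 from by norm_num, ← Real.sqrt_eq_rpow, ← Real.sqrt_eq_rpow,
      ← Real.sqrt_mul (Pmix0_pos hp0 hp1 i).le]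
  have hmin : ∀ τ : ℝ, S ≤ ∑ i : Fin (n+1), Pmix0 (n+1) p i ^ τ * Pmix1 (n+1) p i ^ (1-τ) := by
    intro τ
    have hrev : ∑ i : Fin (n+1), Pmix1 (n+1) p i ^ τ * Pmix0 (n+1) p i ^ (1-τ)
        = ∑ i : Fin (n+1), Pmix0 (n+1) p i ^ τ * Pmix1 (n+1) p i ^ (1-τ) := by
      refine Fintype.sum_bijective Fin.rev Fin.rev_bijective _ _ fun i => ?_
      rw [Pmix0_rev, Pmix1_rev]
    have hAM := Finset.sum_le_sum (s := Finset.univ) (f := fun i : Fin (n+1) =>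
        2 * Real.sqrt (Pmix0 (n+1) p i * Pmix1 (n+1) p i))
      (g := fun i : Fin (n+1) =>
        Pmix0 (n+1) p i ^ τ * Pmix1 (n+1) p i ^ (1-τ) + Pmix1 (n+1) p i ^ τ * Pmix0 (n+1) p i ^ (1-τ))
      (fun i _ => amgm_rpow (Pmix0_pos hp0 hp1 i) (Pmix1_pos hp0 hp1 i) τ)
    rw [Finset.sum_add_distrib, hrev, ← Finset.mul_sum, ← hSdef] at hAM
    linarith
  have hIsLeast : IsLeast
      ((fun τ : ℝ => Real.log (∑ y, Pmix0 (n+1) p y ^ τ * Pmix1 (n+1) p y ^ (1 - τ))) '' Set.Icc 0 1)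
      (Real.log S) := by
    constructor
    · exact ⟨1/2, by norm_num, by simp only []; rw [hg_half]⟩
    · rintro z ⟨τ, _, rfl⟩
      exact Real.log_le_log hSpos (hmin τ)
  rw [chernoffInfo, hIsLeast.csInf_eq]

end ChernoffAux

open ChernoffAux in
/-- Fix any `0 < p < 1/2`. The Chernoff information between the two binomial
mixtures `P₀` and `P₁` converges, as `L → ∞`, to `KL(0.5‖p)`. -/
theorem chernoff_mixture_tendsto_KLhalf (p : ℝ) (hp0 : 0 < p) (hp1 : p < 1/2) :
    Tendsto (fun L : ℕ => chernoffInfo (Pmix0 L p) (Pmix1 L p)) atTop (nhds (KLhalf p)) := by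
  have hp1' : p < 1 := by linarith
  have h1p : 0 < 1 - p := by linarith
  set q : ℝ := Real.sqrt (p*(1-p)) with hqdef
  have hqpos : 0 < q := Real.sqrt_pos.2 (by positivity)
  have hq2 : q^2 = p*(1-p) := Real.sq_sqrt (by positivity)
  have h2q1 : 2*q < 1 := by
    have hqhalf : q < 1/2 := by
      rw [hqdef, show (1:ℝ)/2 = Real.sqrt ((1/2)^2) from (Real.sqrt_sq (by norm_num)).symm]
      exact Real.sqrt_lt_sqrt (by positivity) (by nlinarith)
    linarith
  have hKL : KLhalf p = - Real.log (2*q) := by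
    rw [KLhalf, Real.log_div (by norm_num) (ne_of_gt hp0),
      Real.log_div (by norm_num) (ne_of_gt h1p),
      Real.log_mul two_ne_zero (ne_of_gt hqpos), hqdef,
      Real.log_sqrt (by positivity), Real.log_mul (ne_of_gt hp0) (ne_of_gt h1p),
      show (0.5:ℝ) = 1/2 from by norm_num, Real.log_div one_ne_zero two_ne_zero, Real.log_one]
    ring
  -- limit of the Bhattacharyya sum
  set S : ℕ → ℝ := fun L => ∑ i : Fin L, Real.sqrt (Pmix0 L p i * Pmix1 L p i) with hSdef
  have hS : Tendsto S atTop (nhds (2*q)) := by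
    have hup : Tendsto (fun L : ℕ => 2*q + (2*q)^(L-1)) atTop (nhds (2*q)) := by
      have h0 : Tendsto (fun L : ℕ => (2*q)^(L-1)) atTop (nhds 0) :=
        (tendsto_pow_atTop_nhds_zero_of_lt_one (by positivity) h2q1).comp
          (tendsto_sub_atTop_nat 1)
      simpa using tendsto_const_nhds.add h0
    refine tendsto_of_tendsto_of_tendsto_of_le_of_le' tendsto_const_nhds hup ?_ ?_
    · filter_upwards [eventually_ge_atTop 1] with L hL
      obtain ⟨n, rfl⟩ : ∃ n, L = n + 1 := ⟨L - 1, by omega⟩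
      exact (S_bounds hp0 hp1 n).1
    · filter_upwards [eventually_ge_atTop 1] with L hL
      obtain ⟨n, rfl⟩ : ∃ n, L = n + 1 := ⟨L - 1, by omega⟩
      simpa using (S_bounds hp0 hp1 n).2
  have hlog : Tendsto (fun L : ℕ => - Real.log (S L)) atTop (nhds (- Real.log (2*q))) :=
    (((Real.continuousAt_log (by positivity)).tendsto.comp hS).neg)
  rw [hKL]
  refine hlog.congr' ?_
  filter_upwards [eventually_ge_atTop 1] with L hL
  obtain ⟨n, rfl⟩ : ∃ n, L = n + 1 := ⟨L - 1, by omega⟩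
  exact (chernoff_eval hp0 hp1' n).symm
end
end

section
/- Fix an integer L ≥ 2 and 0 < p < 1/2. Let P_0 = (1−p)·Binomial(L−1, p) + p·Binomial(L−1, 1−p) and P_1 = p·Binomial(L−1, p) + (1−p)·Binomial(L−1, 1−p), so that P_0(i) = C(L−1, i)·(p^i(1−p)^{L−i} + (1−p)^i p^{L−i}) and P_1(i) = C(L−1, i)·(p^{i+1}(1−p)^{L−i−1} + (1−p)^{i+1} p^{L−i−1}) for 0 ≤ i ≤ L−1. Then the infimum defining the Chernoff information D(P_0,P_1) is attained at τ = 1/2, and D(P_0,P_1) = −log Σ_{i=0}^{L−1} C(L−1, i) · sqrt[ (p^i(1−p)^{L−i} + (1−p)^i p^{L−i}) · (p^{i+1}(1−p)^{L−i−1} + (1−p)^{i+1} p^{L−i−1}) ]. -/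
open Filter

noncomputable section
attribute [local instance] Classical.propDecidable

lemma pmix0_pos (L : ℕ) (p : ℝ) (hp0 : 0 < p) (hp1 : p < 1/2) (i : Fin L) :
    0 < Pmix0 L p i := by
  have h1 : (0:ℝ) < 1 - p := by linarith
  have hc : 0 < (L-1).choose i := Nat.choose_pos (by omega)
  have : (0:ℝ) < ((L-1).choose i : ℝ) := by exact_mod_cast hc
  unfold Pmix0; positivity

lemma pmix1_pos (L : ℕ) (p : ℝ) (hp0 : 0 < p) (hp1 : p < 1/2) (i : Fin L) :
    0 < Pmix1 L p i := by
  have h1 : (0:ℝ) < 1 - p := by linarith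
  have hc : 0 < (L-1).choose i := Nat.choose_pos (by omega)
  have : (0:ℝ) < ((L-1).choose i : ℝ) := by exact_mod_cast hc
  unfold Pmix1; positivity

lemma pmix_symm0 (L : ℕ) (hL : 2 ≤ L) (p : ℝ) (i : Fin L) :
    Pmix0 L p i.rev = Pmix1 L p i := by
  have hi : (i : ℕ) < L := i.isLt
  have hv : (i.rev : ℕ) = L - ((i:ℕ) + 1) := Fin.val_rev i
  simp only [Pmix0, Pmix1, hv]
  have e1 : L - (L - ((i:ℕ)+1)) = (i:ℕ) + 1 := by omega
  have e2 : L - ((i:ℕ)+1) = L - (i:ℕ) - 1 := by omega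
  have e3 : (L-1).choose (L - ((i:ℕ)+1)) = (L-1).choose i := by
    have : L - ((i:ℕ)+1) = (L-1) - (i:ℕ) := by omega
    rw [this, Nat.choose_symm (by omega)]
  rw [e1, e3, e2]; ring

lemma pmix_symm1 (L : ℕ) (hL : 2 ≤ L) (p : ℝ) (i : Fin L) :
    Pmix1 L p i.rev = Pmix0 L p i := by
  have := pmix_symm0 L hL p i.rev
  rw [Fin.rev_rev] at this; exact this.symm


/-- For the binomial mixtures `P₀`, `P₁`, the infimum defining the Chernoff
information is attained at `τ = 1/2`, and `D(P₀,P₁)` equals the explicit closed form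
`−log Σᵢ C(L−1,i)·√((pⁱ(1−p)^{L−i} + (1−p)ⁱ p^{L−i})·(p^{i+1}(1−p)^{L−i−1} + (1−p)^{i+1} p^{L−i−1}))`. -/
theorem chernoff_mixture_closed_form (L : ℕ) (hL : 2 ≤ L) (p : ℝ)
    (hp0 : 0 < p) (hp1 : p < 1/2) :
    IsLeast
      ((fun τ : ℝ => Real.log (∑ i, Pmix0 L p i ^ τ * Pmix1 L p i ^ (1 - τ))) ''
        Set.Icc 0 1)
      ((fun τ : ℝ => Real.log (∑ i, Pmix0 L p i ^ τ * Pmix1 L p i ^ (1 - τ))) (1/2)) ∧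
    chernoffInfo (Pmix0 L p) (Pmix1 L p) =
      - Real.log (∑ i : Fin L, ((L-1).choose i : ℝ) *
          Real.sqrt ((p ^ (i:ℕ) * (1-p) ^ (L - (i:ℕ)) + (1-p) ^ (i:ℕ) * p ^ (L - (i:ℕ))) *
            (p ^ ((i:ℕ)+1) * (1-p) ^ (L - (i:ℕ) - 1) +
              (1-p) ^ ((i:ℕ)+1) * p ^ (L - (i:ℕ) - 1)))) := by
  set P0 := Pmix0 L p with hP0
  set P1 := Pmix1 L p with hP1
  have h0pos : ∀ i, 0 < P0 i := pmix0_pos L p hp0 hp1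
  have h1pos : ∀ i, 0 < P1 i := pmix1_pos L p hp0 hp1
  set g : ℝ → ℝ := fun τ => ∑ i, P0 i ^ τ * P1 i ^ (1 - τ) with hg
  -- g(1/2) ≤ g(τ) for all τ
  have hkey : ∀ τ : ℝ, g (1/2) ≤ g τ := by
    intro τ
    -- h(τ) = g(τ) by reversal symmetry
    have hsym : (∑ i, P0 i ^ (1-τ) * P1 i ^ τ) = g τ := by
      rw [hg]
      refine (Fintype.sum_equiv (Fin.revPerm) _ _ ?_).symm
      intro i
      simp only [Fin.revPerm_apply, hP0, hP1]
      rw [pmix_symm0 L hL p i, pmix_symm1 L hL p i]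
      ring
    have hterm : ∀ i : Fin L, P0 i ^ ((1:ℝ)/2) * P1 i ^ (1 - (1:ℝ)/2)
        ≤ (P0 i ^ τ * P1 i ^ (1-τ) + P0 i ^ (1-τ) * P1 i ^ τ) / 2 := by
      intro i
      have hx : (0:ℝ) < P0 i ^ τ * P1 i ^ (1-τ) :=
        mul_pos (Real.rpow_pos_of_pos (h0pos i) _) (Real.rpow_pos_of_pos (h1pos i) _)
      have hy : (0:ℝ) < P0 i ^ (1-τ) * P1 i ^ τ :=
        mul_pos (Real.rpow_pos_of_pos (h0pos i) _) (Real.rpow_pos_of_pos (h1pos i) _)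
      have hxy : (P0 i ^ τ * P1 i ^ (1-τ)) * (P0 i ^ (1-τ) * P1 i ^ τ) = P0 i * P1 i := by
        rw [show (P0 i ^ τ * P1 i ^ (1-τ)) * (P0 i ^ (1-τ) * P1 i ^ τ)
            = (P0 i ^ τ * P0 i ^ (1-τ)) * (P1 i ^ (1-τ) * P1 i ^ τ) by ring,
          ← Real.rpow_add (h0pos i), ← Real.rpow_add (h1pos i)]
        norm_num
      have hlhs : P0 i ^ ((1:ℝ)/2) * P1 i ^ (1 - (1:ℝ)/2)
          = Real.sqrt (P0 i * P1 i) := by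
        rw [show (1 - (1:ℝ)/2) = 1/2 by norm_num,
          Real.sqrt_eq_rpow, ← Real.mul_rpow (h0pos i).le (h1pos i).le]
      rw [hlhs, ← hxy]
      set x := P0 i ^ τ * P1 i ^ (1-τ)
      set y := P0 i ^ (1-τ) * P1 i ^ τ
      have h2 : Real.sqrt (x*y) ≤ Real.sqrt (((x+y)/2)^2) := by
        apply Real.sqrt_le_sqrt; nlinarith [sq_nonneg (x - y)]
      rwa [Real.sqrt_sq (by positivity)] at h2
    calc g (1/2) ≤ ∑ i, (P0 i ^ τ * P1 i ^ (1-τ) + P0 i ^ (1-τ) * P1 i ^ τ) / 2 :=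
          Finset.sum_le_sum fun i _ => hterm i
      _ = (g τ + ∑ i, P0 i ^ (1-τ) * P1 i ^ τ) / 2 := by
          rw [hg]; rw [← Finset.sum_add_distrib, ← Finset.sum_div]
      _ = g τ := by rw [hsym]; ring
  have hgpos : ∀ τ : ℝ, 0 < g τ := by
    intro τ
    haveI : Nonempty (Fin L) := ⟨⟨0, by omega⟩⟩
    apply Finset.sum_pos
    · intro i _
      exact mul_pos (Real.rpow_pos_of_pos (h0pos i) _) (Real.rpow_pos_of_pos (h1pos i) _)
    · exact Finset.univ_nonempty
  have hleast : IsLeast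
      ((fun τ : ℝ => Real.log (∑ i, P0 i ^ τ * P1 i ^ (1 - τ))) '' Set.Icc 0 1)
      ((fun τ : ℝ => Real.log (∑ i, P0 i ^ τ * P1 i ^ (1 - τ))) (1/2)) := by
    constructor
    · exact ⟨1/2, by norm_num, rfl⟩
    · rintro x ⟨τ, _, rfl⟩
      exact Real.log_le_log (hgpos _) (hkey τ)
  refine ⟨hleast, ?_⟩
  rw [chernoffInfo, hleast.csInf_eq]
  congr 1
  simp only
  congr 1
  rw [hg] at *
  refine Finset.sum_congr rfl fun i _ => ?_
  have hc : 0 < (L-1).choose i := Nat.choose_pos (by have := i.isLt; omega)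
  have hcr : (0:ℝ) ≤ ((L-1).choose i : ℝ) := by positivity
  have h1 : (0:ℝ) < 1 - p := by linarith
  have hA : (0:ℝ) ≤ p ^ (i:ℕ) * (1-p) ^ (L - (i:ℕ)) + (1-p) ^ (i:ℕ) * p ^ (L - (i:ℕ)) := by
    positivity
  have hB : (0:ℝ) ≤ p ^ ((i:ℕ)+1) * (1-p) ^ (L - (i:ℕ) - 1)
      + (1-p) ^ ((i:ℕ)+1) * p ^ (L - (i:ℕ) - 1) := by positivity
  rw [show (1 - (1:ℝ)/2) = 1/2 by norm_num, ← Real.sqrt_eq_rpow, ← Real.sqrt_eq_rpow,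
    hP0, hP1]
  simp only [Pmix0, Pmix1]
  rw [← Real.sqrt_mul (by positivity), show
    (((L-1).choose i : ℝ) * (p ^ (i:ℕ) * (1-p) ^ (L - (i:ℕ)) + (1-p) ^ (i:ℕ) * p ^ (L - (i:ℕ)))) *
    (((L-1).choose i : ℝ) * (p ^ ((i:ℕ)+1) * (1-p) ^ (L - (i:ℕ) - 1) + (1-p) ^ ((i:ℕ)+1) * p ^ (L - (i:ℕ) - 1)))
    = ((L-1).choose i : ℝ)^2 * ((p ^ (i:ℕ) * (1-p) ^ (L - (i:ℕ)) + (1-p) ^ (i:ℕ) * p ^ (L - (i:ℕ))) *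
      (p ^ ((i:ℕ)+1) * (1-p) ^ (L - (i:ℕ) - 1) + (1-p) ^ ((i:ℕ)+1) * p ^ (L - (i:ℕ) - 1))) by ring,
    Real.sqrt_mul (by positivity), Real.sqrt_sq hcr]
end
end

section
/- Fix 0 < p < 1/2 and let L = 2. With P_0 = (1−p)·Binomial(1, p) + p·Binomial(1, 1−p) and P_1 = p·Binomial(1, p) + (1−p)·Binomial(1, 1−p), the Chernoff information satisfies D(P_0,P_1) = −log(2·sqrt(θ(1−θ))) = KL(0.5‖θ), where θ := 2p(1−p). -/
open Filter

noncomputable section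
attribute [local instance] Classical.propDecidable

/-- For `L = 2` and `0 < p < 1/2`, with `θ := 2p(1−p)`, the Chernoff
information between the mixtures `P₀`, `P₁` equals `−log(2√(θ(1−θ))) = KL(0.5‖θ)`. -/
theorem chernoff_mixture_L2 (p : ℝ) (hp0 : 0 < p) (hp1 : p < 1/2) :
    chernoffInfo (Pmix0 2 p) (Pmix1 2 p) =
        - Real.log (2 * Real.sqrt ((2*p*(1-p)) * (1 - 2*p*(1-p)))) ∧
    chernoffInfo (Pmix0 2 p) (Pmix1 2 p) = KLhalf (2*p*(1-p)) := by

  set θ : ℝ := 2*p*(1-p) with hθdef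
  have hθ0 : 0 < θ := by nlinarith
  have hθ1 : θ < 1 := by nlinarith
  have h1θ : 0 < 1 - θ := by linarith
  -- the two mass functions, explicitly
  have b00 : Pmix0 2 p 0 = 1 - θ := by simp [Pmix0, hθdef]; ring
  have b01 : Pmix0 2 p 1 = θ := by simp [Pmix0, hθdef]; ring
  have b10 : Pmix1 2 p 0 = θ := by simp [Pmix1, hθdef]; ring
  have b11 : Pmix1 2 p 1 = 1 - θ := by simp [Pmix1, hθdef]; ring
  have key : (fun τ : ℝ => Real.log (∑ y, Pmix0 2 p y ^ τ * Pmix1 2 p y ^ (1 - τ)))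
      = fun τ : ℝ => Real.log ((1-θ)^τ * θ^(1-τ) + θ^τ * (1-θ)^(1-τ)) := by
    funext τ
    rw [Fin.sum_univ_two, b00, b01, b10, b11]
  set M : ℝ := 2 * Real.sqrt (θ * (1 - θ)) with hM
  have hMpos : 0 < M := by positivity
  -- lower bound via AM-GM
  have hlb : ∀ τ : ℝ, M ≤ (1-θ)^τ * θ^(1-τ) + θ^τ * (1-θ)^(1-τ) := by
    intro τ
    set a : ℝ := (1-θ)^τ * θ^(1-τ) with ha'
    set b : ℝ := θ^τ * (1-θ)^(1-τ) with hb'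
    have ha : 0 ≤ a := by positivity
    have hb : 0 ≤ b := by positivity
    have hab : a * b = θ * (1 - θ) := by
      have e1 : a * b = ((1-θ)^τ * (1-θ)^(1-τ)) * (θ^τ * θ^(1-τ)) := by ring
      rw [e1, ← Real.rpow_add h1θ, ← Real.rpow_add hθ0]
      have : τ + (1 - τ) = 1 := by ring
      rw [this, Real.rpow_one, Real.rpow_one]; ring
    have hs : Real.sqrt (θ * (1-θ)) = Real.sqrt a * Real.sqrt b := by
      rw [← hab, Real.sqrt_mul ha]
    rw [hM, hs]
    nlinarith [sq_nonneg (Real.sqrt a - Real.sqrt b), Real.sq_sqrt ha, Real.sq_sqrt hb]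
  -- value at τ = 1/2
  have hval : (1-θ)^(1/2 : ℝ) * θ^(1-(1/2 : ℝ)) + θ^(1/2 : ℝ) * (1-θ)^(1-(1/2 : ℝ)) = M := by
    have h12 : (1 : ℝ) - 1/2 = 1/2 := by norm_num
    rw [h12, hM, Real.sqrt_mul hθ0.le, Real.sqrt_eq_rpow, Real.sqrt_eq_rpow]
    ring
  -- compute the infimum
  have hSinf : sInf ((fun τ : ℝ => Real.log ((1-θ)^τ * θ^(1-τ) + θ^τ * (1-θ)^(1-τ))) ''
      Set.Icc 0 1) = Real.log M := by
    apply le_antisymm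
    · apply csInf_le
      · refine ⟨Real.log M, ?_⟩
        rintro x ⟨τ, _, rfl⟩
        exact Real.log_le_log hMpos (hlb τ)
      · exact ⟨1/2, by constructor <;> norm_num, by simp only; rw [hval]⟩
    · apply le_csInf ((Set.nonempty_Icc.2 (by norm_num)).image _)
      rintro x ⟨τ, _, rfl⟩
      exact Real.log_le_log hMpos (hlb τ)
  have hC : chernoffInfo (Pmix0 2 p) (Pmix1 2 p) = - Real.log M := by
    rw [chernoffInfo, key, hSinf]
  have hKL : - Real.log M = KLhalf θ := by
    rw [hM, KLhalf, Real.log_mul (by norm_num) (by positivity),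
      Real.log_sqrt (by positivity), Real.log_mul hθ0.ne' h1θ.ne',
      Real.log_div (by norm_num) hθ0.ne', Real.log_div (by norm_num) h1θ.ne']
    have : Real.log 0.5 = - Real.log 2 := by
      rw [show (0.5 : ℝ) = 2⁻¹ by norm_num, Real.log_inv]
    rw [this]; ring
  exact ⟨hC, hC.trans hKL⟩
end
end

section
/- Fix any ε > 0. Let P_0 and P_1 be two probability distributions on a fixed finite alphabet with Chernoff information D* = D(P_0,P_1) > 0 and max_z P_1(z)/P_0(z) < ∞. Let N_z ~ Poisson(N) and, conditional on N_z, let Z = (Z_1,…,Z_{N_z}) be i.i.d. samples. Then the probability under P_0 that P_1(Z)/P_0(Z) ≥ 1 is at most exp{−N·(1 − e^{−D*})}; moreover, for all sufficiently large N, this probability is at least exp{−(1+ε)·N·(1 − e^{−D*})}. -/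
open Filter Topology

noncomputable section
attribute [local instance] Classical.propDecidable

/-- The `P₀`-probability that the likelihood ratio of `k` i.i.d. samples favors `P₁`,
i.e. `P₀{P₁(Z)/P₀(Z) ≥ 1}` for `Z = (Z₁,…,Z_k)` i.i.d. -/
def lrErrP {α : Type*} [Fintype α] (P0 P1 : α → ℝ) (k : ℕ) : ℝ :=
  ∑ z ∈ Finset.univ.filter (fun z : Fin k → α => ∏ i, P0 (z i) ≤ ∏ i, P1 (z i)),
    ∏ i, P0 (z i)

namespace Chernoff11

variable {α : Type*} [Fintype α]

/-! ### Product-measure moment identities -/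

lemma sum_prod_eq_pow (F : α → ℝ) (k : ℕ) :
    ∑ z : Fin k → α, ∏ i, F (z i) = (∑ y, F y) ^ k := by
  have h := Finset.prod_univ_sum (fun _ : Fin k => (Finset.univ : Finset α)) (fun _ y => F y)
  rw [Fintype.piFinset_univ] at h
  rw [← h, Finset.prod_const, Finset.card_univ, Fintype.card_fin]

lemma prodm_sum_prod (w : α → ℝ) (hw : ∑ y, w y = 1) (k : ℕ) :
    ∑ z : Fin k → α, ∏ i, w (z i) = 1 := by
  rw [sum_prod_eq_pow, hw, one_pow]

lemma prodm_sum_mul (w f : α → ℝ) (hw : ∑ y, w y = 1) (hf : ∑ y, w y * f y = 0) (k : ℕ) :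
    ∑ z : Fin k → α, (∏ i, w (z i)) * (∑ i, f (z i)) = 0 := by
  induction k with
  | zero => simp
  | succ k ih =>
    rw [← Equiv.sum_comp (Fin.consEquiv (fun _ : Fin (k+1) => α))
      (fun z : Fin (k+1) → α => (∏ i, w (z i)) * (∑ i, f (z i)))]
    rw [Fintype.sum_prod_type]
    simp only [Fin.consEquiv, Equiv.coe_fn_mk, Fin.prod_univ_succ, Fin.sum_univ_succ,
      Fin.cons_zero, Fin.cons_succ]
    have key : ∀ a : α, ∑ z : Fin k → α, (w a * ∏ i, w (z i)) * (f a + ∑ i, f (z i))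
        = w a * f a := by
      intro a
      have e1 : ∀ z : Fin k → α, (w a * ∏ i, w (z i)) * (f a + ∑ i, f (z i))
          = w a * f a * (∏ i, w (z i)) + w a * ((∏ i, w (z i)) * (∑ i, f (z i))) := by
        intro z; ring
      rw [Finset.sum_congr rfl (fun z _ => e1 z), Finset.sum_add_distrib, ← Finset.mul_sum,
        ← Finset.mul_sum, prodm_sum_prod w hw k, ih]
      ring
    rw [Finset.sum_congr rfl (fun a _ => key a), hf]

lemma prodm_sum_sq (w f : α → ℝ) (hw : ∑ y, w y = 1) (hf : ∑ y, w y * f y = 0) (k : ℕ) :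
    ∑ z : Fin k → α, (∏ i, w (z i)) * (∑ i, f (z i)) ^ 2
      = k * ∑ y, w y * f y ^ 2 := by
  induction k with
  | zero => simp
  | succ k ih =>
    rw [← Equiv.sum_comp (Fin.consEquiv (fun _ : Fin (k+1) => α))
      (fun z : Fin (k+1) → α => (∏ i, w (z i)) * (∑ i, f (z i)) ^ 2)]
    rw [Fintype.sum_prod_type]
    simp only [Fin.consEquiv, Equiv.coe_fn_mk, Fin.prod_univ_succ, Fin.sum_univ_succ,
      Fin.cons_zero, Fin.cons_succ]
    have key : ∀ a : α, ∑ z : Fin k → α, (w a * ∏ i, w (z i)) * (f a + ∑ i, f (z i)) ^ 2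
        = w a * f a ^ 2 + w a * (k * ∑ y, w y * f y ^ 2) := by
      intro a
      have e1 : ∀ z : Fin k → α, (w a * ∏ i, w (z i)) * (f a + ∑ i, f (z i)) ^ 2
          = w a * f a ^ 2 * (∏ i, w (z i))
            + 2 * (w a * f a) * ((∏ i, w (z i)) * (∑ i, f (z i)))
            + w a * ((∏ i, w (z i)) * (∑ i, f (z i)) ^ 2) := by
        intro z; ring
      rw [Finset.sum_congr rfl (fun z _ => e1 z), Finset.sum_add_distrib,
        Finset.sum_add_distrib, ← Finset.mul_sum, ← Finset.mul_sum, ← Finset.mul_sum,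
        prodm_sum_prod w hw k, prodm_sum_mul w f hw hf k, ih]
      ring
    rw [Finset.sum_congr rfl (fun a _ => key a), Finset.sum_add_distrib, ← Finset.sum_mul, hw]
    push_cast
    ring

/-! ### Basic facts -/

def Zf (P0 P1 : α → ℝ) (τ : ℝ) : ℝ := ∑ y, P0 y ^ τ * P1 y ^ (1 - τ)

lemma chernoffInfo_eq (P0 P1 : α → ℝ) :
    chernoffInfo P0 P1 = - sInf ((fun τ : ℝ => Real.log (Zf P0 P1 τ)) '' Set.Icc 0 1) := rfl

lemma exists_pos (P0 P1 : α → ℝ) (h00 : ∀ z, 0 ≤ P0 z) (h10 : ∀ z, 0 ≤ P1 z)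
    (hs1 : ∑ z, P1 z = 1) (habs : ∀ z, P0 z = 0 → P1 z = 0) :
    ∃ y, 0 < P0 y ∧ 0 < P1 y := by
  have : ∃ y ∈ Finset.univ, P1 y ≠ 0 := by
    by_contra h
    push_neg at h
    rw [Finset.sum_eq_zero (fun y hy => h y hy)] at hs1
    norm_num at hs1
  obtain ⟨y, -, hy⟩ := this
  refine ⟨y, ?_, (h10 y).lt_of_ne' hy⟩
  rcases (h00 y).lt_or_eq with h | h
  · exact h
  · exact absurd (habs y h.symm) hy

lemma lrErrP_nonneg (P0 P1 : α → ℝ) (h00 : ∀ z, 0 ≤ P0 z) (k : ℕ) :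
    0 ≤ lrErrP P0 P1 k :=
  Finset.sum_nonneg fun z _ => Finset.prod_nonneg fun i _ => h00 (z i)

variable (P0 P1 : α → ℝ) (y₀ : α)

lemma c_le_Zf (h0 : 0 < P0 y₀) (h1 : 0 < P1 y₀)
    (h00 : ∀ z, 0 ≤ P0 z) (h10 : ∀ z, 0 ≤ P1 z) (τ : ℝ) (hτ : τ ∈ Set.Icc (0:ℝ) 1) :
    min (P0 y₀) (P1 y₀) ≤ Zf P0 P1 τ := by
  obtain ⟨hτ0, hτ1⟩ := hτ
  set c := min (P0 y₀) (P1 y₀) with hc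
  have hc0 : 0 < c := lt_min h0 h1
  have step1 : c ≤ P0 y₀ ^ τ * P1 y₀ ^ (1 - τ) := by
    have e1 : c ^ τ * c ^ (1 - τ) = c := by
      rw [← Real.rpow_add hc0]
      norm_num
    calc c = c ^ τ * c ^ (1 - τ) := e1.symm
      _ ≤ P0 y₀ ^ τ * P1 y₀ ^ (1 - τ) := by
          apply mul_le_mul
          · exact Real.rpow_le_rpow hc0.le (min_le_left _ _) hτ0
          · exact Real.rpow_le_rpow hc0.le (min_le_right _ _) (by linarith)
          · exact Real.rpow_nonneg hc0.le _
          · exact Real.rpow_nonneg (h00 y₀) _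
  refine step1.trans ?_
  exact Finset.single_le_sum
    (fun y _ => mul_nonneg (Real.rpow_nonneg (h00 y) _) (Real.rpow_nonneg (h10 y) _))
    (Finset.mem_univ y₀)

lemma Zf_pos (h0 : 0 < P0 y₀) (h1 : 0 < P1 y₀)
    (h00 : ∀ z, 0 ≤ P0 z) (h10 : ∀ z, 0 ≤ P1 z) (τ : ℝ) (hτ : τ ∈ Set.Icc (0:ℝ) 1) : 0 < Zf P0 P1 τ :=
  lt_of_lt_of_le (lt_min h0 h1) (c_le_Zf P0 P1 y₀ h0 h1 h00 h10 τ hτ)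

lemma bddBelow_logZf (h0 : 0 < P0 y₀) (h1 : 0 < P1 y₀)
    (h00 : ∀ z, 0 ≤ P0 z) (h10 : ∀ z, 0 ≤ P1 z) :
    BddBelow ((fun τ : ℝ => Real.log (Zf P0 P1 τ)) '' Set.Icc 0 1) := by
  refine ⟨Real.log (min (P0 y₀) (P1 y₀)), ?_⟩
  rintro s ⟨τ, hτ, rfl⟩
  exact Real.log_le_log (lt_min h0 h1) (c_le_Zf P0 P1 y₀ h0 h1 h00 h10 τ hτ)

lemma nonempty_logZf :
    ((fun τ : ℝ => Real.log (Zf P0 P1 τ)) '' Set.Icc 0 1).Nonempty :=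
  ⟨_, ⟨0, by norm_num, rfl⟩⟩

lemma exp_negD_le_Zf (h0 : 0 < P0 y₀) (h1 : 0 < P1 y₀)
    (h00 : ∀ z, 0 ≤ P0 z) (h10 : ∀ z, 0 ≤ P1 z) (τ : ℝ) (hτ : τ ∈ Set.Icc (0:ℝ) 1) :
    Real.exp (-chernoffInfo P0 P1) ≤ Zf P0 P1 τ := by
  rw [chernoffInfo_eq, neg_neg]
  have h1' : sInf ((fun τ : ℝ => Real.log (Zf P0 P1 τ)) '' Set.Icc 0 1)
      ≤ Real.log (Zf P0 P1 τ) :=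
    csInf_le (bddBelow_logZf P0 P1 y₀ h0 h1 h00 h10) ⟨τ, hτ, rfl⟩
  calc Real.exp _ ≤ Real.exp (Real.log (Zf P0 P1 τ)) := Real.exp_le_exp.2 h1'
    _ = Zf P0 P1 τ := Real.exp_log (Zf_pos P0 P1 y₀ h0 h1 h00 h10 τ hτ)



lemma le_rpow_mul_rpow {a b τ : ℝ} (ha : 0 ≤ a) (hab : a ≤ b)
    (hτ0 : 0 ≤ τ) (hτ1 : τ ≤ 1) : a ≤ a ^ τ * b ^ (1 - τ) := by
  rcases ha.lt_or_eq with ha' | ha'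
  · have hb : 0 < b := lt_of_lt_of_le ha' hab
    have e1 : a ^ τ * a ^ (1 - τ) = a := by
      rw [← Real.rpow_add ha']; norm_num
    calc a = a ^ τ * a ^ (1 - τ) := e1.symm
      _ ≤ a ^ τ * b ^ (1 - τ) :=
        mul_le_mul_of_nonneg_left (Real.rpow_le_rpow ha'.le hab (by linarith))
          (Real.rpow_nonneg ha'.le _)
  · rcases hτ0.lt_or_eq with hτ' | hτ'
    · rw [← ha', Real.zero_rpow hτ'.ne', zero_mul]
    · rw [← ha', ← hτ']
      rw [Real.rpow_zero, one_mul]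
      norm_num [Real.rpow_one]
      linarith

set_option maxHeartbeats 1000000 in
lemma lrErrP_le_Zf_pow (P0 P1 : α → ℝ) (h00 : ∀ z, 0 ≤ P0 z) (h10 : ∀ z, 0 ≤ P1 z)
    (τ : ℝ) (hτ : τ ∈ Set.Icc (0:ℝ) 1) (k : ℕ) :
    lrErrP P0 P1 k ≤ Zf P0 P1 τ ^ k := by
  obtain ⟨hτ0, hτ1⟩ := hτ
  have hstep : ∀ z ∈ Finset.univ.filter
      (fun z : Fin k → α => ∏ i, P0 (z i) ≤ ∏ i, P1 (z i)),
      ∏ i, P0 (z i) ≤ ∏ i, (P0 (z i) ^ τ * P1 (z i) ^ (1 - τ)) := by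
    intro z hz
    rw [Finset.mem_filter] at hz
    have hab := hz.2
    have ha : (0:ℝ) ≤ ∏ i, P0 (z i) := Finset.prod_nonneg fun i _ => h00 (z i)
    have e1 : ∏ i, (P0 (z i) ^ τ * P1 (z i) ^ (1 - τ))
        = (∏ i, P0 (z i)) ^ τ * (∏ i, P1 (z i)) ^ (1 - τ) := by
      rw [Finset.prod_mul_distrib,
        Real.finset_prod_rpow _ _ (fun i _ => h00 (z i)) τ,
        Real.finset_prod_rpow _ _ (fun i _ => h10 (z i)) (1 - τ)]
    rw [e1]
    exact le_rpow_mul_rpow ha hab hτ0 hτ1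
  calc lrErrP P0 P1 k
      ≤ ∑ z ∈ Finset.univ.filter
          (fun z : Fin k → α => ∏ i, P0 (z i) ≤ ∏ i, P1 (z i)),
          ∏ i, (P0 (z i) ^ τ * P1 (z i) ^ (1 - τ)) := Finset.sum_le_sum hstep
    _ ≤ ∑ z : Fin k → α, ∏ i, (P0 (z i) ^ τ * P1 (z i) ^ (1 - τ)) :=
        Finset.sum_le_sum_of_subset_of_nonneg (Finset.filter_subset _ _)
          (fun z _ _ => Finset.prod_nonneg fun i _ =>
            mul_nonneg (Real.rpow_nonneg (h00 (z i)) _) (Real.rpow_nonneg (h10 (z i)) _))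
    _ = Zf P0 P1 τ ^ k := sum_prod_eq_pow (fun y => P0 y ^ τ * P1 y ^ (1 - τ)) k

lemma lrErrP_le_exp (P0 P1 : α → ℝ) (h00 : ∀ z, 0 ≤ P0 z) (h10 : ∀ z, 0 ≤ P1 z)
    (hs1 : ∑ z, P1 z = 1) (habs : ∀ z, P0 z = 0 → P1 z = 0) (k : ℕ) :
    lrErrP P0 P1 k ≤ Real.exp (-chernoffInfo P0 P1) ^ k := by
  obtain ⟨y₀, h0, h1⟩ := exists_pos P0 P1 h00 h10 hs1 habs
  rcases Nat.eq_zero_or_pos k with hk | hk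
  · subst hk
    simp only [pow_zero]
    have : lrErrP P0 P1 0 ≤ Zf P0 P1 0 ^ 0 :=
      lrErrP_le_Zf_pow P0 P1 h00 h10 0 (by norm_num) 0
    simpa using this
  rcases (lrErrP_nonneg P0 P1 h00 k).lt_or_eq with hL | hL
  swap
  · rw [← hL]; positivity
  -- positive case
  have hlog : ∀ s ∈ (fun τ : ℝ => Real.log (Zf P0 P1 τ)) '' Set.Icc 0 1,
      (k:ℝ)⁻¹ * Real.log (lrErrP P0 P1 k) ≤ s := by
    rintro s ⟨τ, hτ, rfl⟩
    have h2 : lrErrP P0 P1 k ≤ Zf P0 P1 τ ^ k := lrErrP_le_Zf_pow P0 P1 h00 h10 τ hτ k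
    have hZ : 0 < Zf P0 P1 τ := Zf_pos P0 P1 y₀ h0 h1 h00 h10 τ hτ
    have h3 : Real.log (lrErrP P0 P1 k) ≤ (k:ℝ) * Real.log (Zf P0 P1 τ) := by
      calc Real.log (lrErrP P0 P1 k) ≤ Real.log (Zf P0 P1 τ ^ k) := Real.log_le_log hL h2
        _ = (k:ℝ) * Real.log (Zf P0 P1 τ) := by rw [Real.log_pow]
    have hk' : (0:ℝ) < (k:ℝ) := by exact_mod_cast hk
    rw [inv_mul_le_iff₀ hk']
    linarith [h3]
  have h4 : (k:ℝ)⁻¹ * Real.log (lrErrP P0 P1 k)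
      ≤ sInf ((fun τ : ℝ => Real.log (Zf P0 P1 τ)) '' Set.Icc 0 1) :=
    le_csInf (nonempty_logZf P0 P1) hlog
  have hk' : (0:ℝ) < (k:ℝ) := by exact_mod_cast hk
  have h5 : Real.log (lrErrP P0 P1 k) ≤ (k:ℝ) * (- chernoffInfo P0 P1) := by
    rw [chernoffInfo_eq, neg_neg]
    rw [inv_mul_le_iff₀ hk'] at h4
    linarith [h4]
  calc lrErrP P0 P1 k = Real.exp (Real.log (lrErrP P0 P1 k)) := (Real.exp_log hL).symm
    _ ≤ Real.exp ((k:ℝ) * (- chernoffInfo P0 P1)) := Real.exp_le_exp.2 h5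
    _ = Real.exp (-chernoffInfo P0 P1) ^ k := Real.exp_nat_mul _ k

lemma tsum_pow_div_factorial (x : ℝ) : ∑' k : ℕ, x ^ k / (Nat.factorial k) = Real.exp x := by
  rw [Real.exp_eq_exp_ℝ, NormedSpace.exp_eq_tsum_div]

lemma poissonP_nonneg {N : ℝ} (hN : 0 ≤ N) (k : ℕ) : 0 ≤ poissonP N k := by
  unfold poissonP
  positivity

lemma upper_bound (P0 P1 : α → ℝ) (h00 : ∀ z, 0 ≤ P0 z) (h10 : ∀ z, 0 ≤ P1 z)
    (hs1 : ∑ z, P1 z = 1) (habs : ∀ z, P0 z = 0 → P1 z = 0)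
    (N : ℝ) (hN : 0 ≤ N) :
    (∑' k : ℕ, poissonP N k * lrErrP P0 P1 k)
      ≤ Real.exp (-(N * (1 - Real.exp (-chernoffInfo P0 P1)))) := by
  set β := Real.exp (-chernoffInfo P0 P1) with hβ
  have hβ0 : 0 < β := Real.exp_pos _
  have key : ∀ k : ℕ, poissonP N k * β ^ k = Real.exp (-N) * ((N * β) ^ k / (Nat.factorial k)) := by
    intro k
    unfold poissonP
    rw [mul_pow]
    ring
  have hsg : Summable (fun k : ℕ => poissonP N k * β ^ k) := by
    apply Summable.congr ((Real.summable_pow_div_factorial (N * β)).mul_left (Real.exp (-N)))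
    intro k
    rw [key k]
  have hle : ∀ k : ℕ, poissonP N k * lrErrP P0 P1 k ≤ poissonP N k * β ^ k := fun k =>
    mul_le_mul_of_nonneg_left (lrErrP_le_exp P0 P1 h00 h10 hs1 habs k) (poissonP_nonneg hN k)
  have hf : Summable (fun k : ℕ => poissonP N k * lrErrP P0 P1 k) :=
    hsg.of_nonneg_of_le
      (fun k => mul_nonneg (poissonP_nonneg hN k) (lrErrP_nonneg P0 P1 h00 k)) hle
  calc (∑' k : ℕ, poissonP N k * lrErrP P0 P1 k)
      ≤ ∑' k : ℕ, poissonP N k * β ^ k := Summable.tsum_le_tsum hle hf hsg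
    _ = Real.exp (-N) * ∑' k : ℕ, (N * β) ^ k / (Nat.factorial k) := by
        rw [← tsum_mul_left]
        exact tsum_congr key
    _ = Real.exp (-N) * Real.exp (N * β) := by rw [tsum_pow_div_factorial]
    _ = Real.exp (-(N * (1 - β))) := by rw [← Real.exp_add]; ring_nf
  

/-! ### The tilting function `g` -/

def Sset (P1 : α → ℝ) : Finset α := Finset.univ.filter (fun y => 0 < P1 y)

def rf (P0 P1 : α → ℝ) (y : α) : ℝ := Real.log (P0 y) - Real.log (P1 y)

def gf (P0 P1 : α → ℝ) (τ : ℝ) : ℝ := ∑ y ∈ Sset P1, P1 y * Real.exp (τ * rf P0 P1 y)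

def gf' (P0 P1 : α → ℝ) (τ : ℝ) : ℝ :=
  ∑ y ∈ Sset P1, P1 y * rf P0 P1 y * Real.exp (τ * rf P0 P1 y)

def gf'' (P0 P1 : α → ℝ) (τ : ℝ) : ℝ :=
  ∑ y ∈ Sset P1, P1 y * rf P0 P1 y ^ 2 * Real.exp (τ * rf P0 P1 y)

lemma mem_Sset {P1 : α → ℝ} {y : α} : y ∈ Sset P1 ↔ 0 < P1 y := by
  simp [Sset]

lemma P0_pos_of_mem_Sset {P0 P1 : α → ℝ} (h00 : ∀ z, 0 ≤ P0 z)
    (habs : ∀ z, P0 z = 0 → P1 z = 0) {y : α} (hy : y ∈ Sset P1) : 0 < P0 y := by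
  rcases (h00 y).lt_or_eq with h | h
  · exact h
  · exact absurd ((mem_Sset.1 hy)) (by rw [habs y h.symm]; exact lt_irrefl 0)

lemma gf_pos (P0 P1 : α → ℝ) (h10 : ∀ z, 0 ≤ P1 z) (hs1 : ∑ z, P1 z = 1) (τ : ℝ) :
    0 < gf P0 P1 τ := by
  have hne : (Sset P1).Nonempty := by
    by_contra h
    rw [Finset.not_nonempty_iff_eq_empty] at h
    have : ∑ z, P1 z = 0 := by
      apply Finset.sum_eq_zero
      intro y hy
      by_contra hy'
      have : y ∈ Sset P1 := mem_Sset.2 ((h10 y).lt_of_ne' hy')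
      rw [h] at this
      exact absurd this (Finset.notMem_empty y)
    rw [hs1] at this; norm_num at this
  exact Finset.sum_pos (fun y hy => mul_pos (mem_Sset.1 hy) (Real.exp_pos _)) hne

lemma hasDerivAt_gf (P0 P1 : α → ℝ) (τ : ℝ) :
    HasDerivAt (gf P0 P1) (gf' P0 P1 τ) τ := by
  have h : ∀ y ∈ Sset P1, HasDerivAt (fun t => P1 y * Real.exp (t * rf P0 P1 y))
      (P1 y * rf P0 P1 y * Real.exp (τ * rf P0 P1 y)) τ := by
    intro y _
    have h1 : HasDerivAt (fun t : ℝ => t * rf P0 P1 y) (rf P0 P1 y) τ := by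
      simpa using (hasDerivAt_id τ).mul_const (rf P0 P1 y)
    have h2 := (h1.exp).const_mul (P1 y)
    exact h2.congr_deriv (by ring)
  have := HasDerivAt.fun_sum h
  exact this

lemma hasDerivAt_gf' (P0 P1 : α → ℝ) (τ : ℝ) :
    HasDerivAt (gf' P0 P1) (gf'' P0 P1 τ) τ := by
  have h : ∀ y ∈ Sset P1,
      HasDerivAt (fun t => P1 y * rf P0 P1 y * Real.exp (t * rf P0 P1 y))
      (P1 y * rf P0 P1 y ^ 2 * Real.exp (τ * rf P0 P1 y)) τ := by
    intro y _
    have h1 : HasDerivAt (fun t : ℝ => t * rf P0 P1 y) (rf P0 P1 y) τ := by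
      simpa using (hasDerivAt_id τ).mul_const (rf P0 P1 y)
    have h2 := (h1.exp).const_mul (P1 y * rf P0 P1 y)
    exact h2.congr_deriv (by ring)
  have := HasDerivAt.fun_sum h
  exact this

lemma gf'_mono (P0 P1 : α → ℝ) (h10 : ∀ z, 0 ≤ P1 z) : Monotone (gf' P0 P1) := by
  apply monotone_of_deriv_nonneg
  · exact fun τ => (hasDerivAt_gf' P0 P1 τ).differentiableAt
  · intro τ
    rw [(hasDerivAt_gf' P0 P1 τ).deriv]
    exact Finset.sum_nonneg fun y hy =>
      mul_nonneg (mul_nonneg (h10 y) (sq_nonneg _)) (Real.exp_pos _).le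

lemma continuous_gf (P0 P1 : α → ℝ) : Continuous (gf P0 P1) :=
  continuous_finset_sum _ fun y _ =>
    continuous_const.mul (Real.continuous_exp.comp (continuous_id.mul continuous_const))

lemma continuous_gf' (P0 P1 : α → ℝ) : Continuous (gf' P0 P1) :=
  continuous_finset_sum _ fun y _ =>
    continuous_const.mul (Real.continuous_exp.comp (continuous_id.mul continuous_const))

lemma gf_eq_Zf (P0 P1 : α → ℝ) (h00 : ∀ z, 0 ≤ P0 z) (h10 : ∀ z, 0 ≤ P1 z)
    (habs : ∀ z, P0 z = 0 → P1 z = 0) {τ : ℝ} (hτ0 : 0 < τ) (hτ1 : τ < 1) :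
    gf P0 P1 τ = Zf P0 P1 τ := by
  unfold gf Zf
  rw [Finset.sum_subset (Finset.subset_univ (Sset P1))]
  · apply Finset.sum_congr rfl
    intro y _
    by_cases hy : y ∈ Sset P1
    · have h1 : 0 < P1 y := mem_Sset.1 hy
      have h0 : 0 < P0 y := P0_pos_of_mem_Sset h00 habs hy
      have e1 : P1 y * Real.exp (τ * rf P0 P1 y)
          = Real.exp (Real.log (P1 y) + τ * rf P0 P1 y) := by
        rw [Real.exp_add, Real.exp_log h1]
      rw [e1, Real.rpow_def_of_pos h0, Real.rpow_def_of_pos h1, ← Real.exp_add, rf]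
      congr 1
      ring
    · have h1 : P1 y = 0 := by
        by_contra h
        exact hy (mem_Sset.2 ((h10 y).lt_of_ne' h))
      rw [h1, Real.zero_rpow (ne_of_gt (by linarith : (0:ℝ) < 1 - τ)), zero_mul, mul_zero]
  · intro y _ hy
    have h1 : P1 y = 0 := by
      by_contra h
      exact hy (mem_Sset.2 ((h10 y).lt_of_ne' h))
    rw [h1, zero_mul]

lemma gf_zero (P0 P1 : α → ℝ) (h10 : ∀ z, 0 ≤ P1 z) (hs1 : ∑ z, P1 z = 1) :
    gf P0 P1 0 = 1 := by
  unfold gf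
  simp only [zero_mul, Real.exp_zero, mul_one]
  rw [Finset.sum_subset (Finset.subset_univ (Sset P1))]
  · exact hs1
  · intro y _ hy
    by_contra h
    exact hy (mem_Sset.2 ((h10 y).lt_of_ne' h))

lemma Zf_zero (P0 P1 : α → ℝ) (hs1 : ∑ z, P1 z = 1) : Zf P0 P1 0 = 1 := by
  unfold Zf
  simp only [Real.rpow_zero, one_mul, sub_zero, Real.rpow_one]
  exact hs1

lemma Zf_one (P0 P1 : α → ℝ) (hs0 : ∑ z, P0 z = 1) : Zf P0 P1 1 = 1 := by
  unfold Zf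
  simp only [Real.rpow_one, sub_self, Real.rpow_zero, mul_one]
  exact hs0

lemma exists_gf_lt_one (P0 P1 : α → ℝ) (h00 : ∀ z, 0 ≤ P0 z) (h10 : ∀ z, 0 ≤ P1 z)
    (hs0 : ∑ z, P0 z = 1) (hs1 : ∑ z, P1 z = 1) (habs : ∀ z, P0 z = 0 → P1 z = 0)
    (hD : 0 < chernoffInfo P0 P1) :
    ∃ τ₀ ∈ Set.Ioo (0:ℝ) 1, gf P0 P1 τ₀ < 1 := by
  obtain ⟨y₀, h0, h1⟩ := exists_pos P0 P1 h00 h10 hs1 habs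
  have hsInf : sInf ((fun τ : ℝ => Real.log (Zf P0 P1 τ)) '' Set.Icc 0 1) < 0 := by
    rw [chernoffInfo_eq] at hD; linarith
  obtain ⟨s, hs, hs0'⟩ := exists_lt_of_csInf_lt (nonempty_logZf P0 P1) hsInf
  obtain ⟨τ, hτ, rfl⟩ := hs
  have hZpos : 0 < Zf P0 P1 τ := Zf_pos P0 P1 y₀ h0 h1 h00 h10 τ hτ
  have hZlt : Zf P0 P1 τ < 1 := by
    by_contra h
    push_neg at h
    have := Real.log_nonneg h
    linarith
  have hτ0 : τ ≠ 0 := by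
    intro h; rw [h, Zf_zero P0 P1 hs1] at hZlt; linarith
  have hτ1 : τ ≠ 1 := by
    intro h; rw [h, Zf_one P0 P1 hs0] at hZlt; linarith
  refine ⟨τ, ⟨(hτ.1).lt_of_ne' hτ0, (hτ.2).lt_of_ne hτ1⟩, ?_⟩
  rw [gf_eq_Zf P0 P1 h00 h10 habs ((hτ.1).lt_of_ne' hτ0) ((hτ.2).lt_of_ne hτ1)]
  exact hZlt

/-- Key selection: a tilting parameter with negative slope and small loss. -/
lemma exists_tilt (P0 P1 : α → ℝ) (h00 : ∀ z, 0 ≤ P0 z) (h10 : ∀ z, 0 ≤ P1 z)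
    (hs0 : ∑ z, P0 z = 1) (hs1 : ∑ z, P1 z = 1) (habs : ∀ z, P0 z = 0 → P1 z = 0)
    (hD : 0 < chernoffInfo P0 P1) (γ : ℝ) (hγ : 0 < γ) :
    ∃ τ' ∈ Set.Ioo (0:ℝ) 1, gf' P0 P1 τ' < 0 ∧
      (1 - τ') * (-(gf' P0 P1 τ') / gf P0 P1 τ') < γ := by
  obtain ⟨τ₀, hτ₀, hgτ₀⟩ := exists_gf_lt_one P0 P1 h00 h10 hs0 hs1 habs hD
  -- minimum of g over [0,1]
  have hcomp : IsCompact (Set.Icc (0:ℝ) 1) := isCompact_Icc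
  obtain ⟨τm, hτm, hmin0⟩ := hcomp.exists_isMinOn (Set.nonempty_Icc.2 zero_le_one)
    ((continuous_gf P0 P1).continuousOn)
  have hmin : ∀ x ∈ Set.Icc (0:ℝ) 1, gf P0 P1 τm ≤ gf P0 P1 x := fun x hx => hmin0 hx
  set m := gf P0 P1 τm with hm
  have hm_lt : m < 1 := lt_of_le_of_lt (hmin τ₀ ⟨hτ₀.1.le, hτ₀.2.le⟩) hgτ₀
  -- the set of minimizers
  set T := Set.Icc (0:ℝ) 1 ∩ {τ | gf P0 P1 τ = m} with hT
  have hT_closed : IsClosed T :=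
    isClosed_Icc.inter (isClosed_eq (continuous_gf P0 P1) continuous_const)
  have hT_ne : T.Nonempty := ⟨τm, ⟨hτm, rfl⟩⟩
  have hT_bdd : BddBelow T := ⟨0, fun τ hτ => hτ.1.1⟩
  set τs := sInf T with hτs
  have hτs_mem : τs ∈ T := hT_closed.csInf_mem hT_ne hT_bdd
  have hτs_Icc : τs ∈ Set.Icc (0:ℝ) 1 := hτs_mem.1
  have hgτs : gf P0 P1 τs = m := hτs_mem.2
  have hτs_pos : 0 < τs := by
    rcases hτs_Icc.1.lt_or_eq with h | h
    · exact h
    · exfalso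
      rw [← h] at hgτs
      rw [gf_zero P0 P1 h10 hs1] at hgτs
      linarith
  -- g' < 0 strictly to the left of τs
  have hg'_neg : ∀ τ ∈ Set.Ioo 0 τs, gf' P0 P1 τ < 0 := by
    intro τ hτ
    by_contra h
    push_neg at h
    have hmono : MonotoneOn (gf P0 P1) (Set.Icc τ τs) := by
      apply monotoneOn_of_deriv_nonneg (convex_Icc τ τs)
        ((continuous_gf P0 P1).continuousOn)
        (fun x _ => ((hasDerivAt_gf P0 P1 x).differentiableAt).differentiableWithinAt)
      intro x hx
      rw [interior_Icc] at hx
      rw [(hasDerivAt_gf P0 P1 x).deriv]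
      exact le_trans h (gf'_mono P0 P1 h10 hx.1.le)
    have h1 : gf P0 P1 τ ≤ gf P0 P1 τs :=
      hmono (Set.left_mem_Icc.2 hτ.2.le) (Set.right_mem_Icc.2 hτ.2.le) hτ.2.le
    have hτIcc : τ ∈ Set.Icc (0:ℝ) 1 := ⟨hτ.1.le, le_trans hτ.2.le hτs_Icc.2⟩
    have h2 : m ≤ gf P0 P1 τ := hmin τ hτIcc
    have h3 : gf P0 P1 τ = m := le_antisymm (by rw [← hgτs]; exact h1) h2
    have : τs ≤ τ := csInf_le hT_bdd ⟨hτIcc, h3⟩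
    linarith [hτ.2]
  -- the loss function h tends to 0 at τs from the left
  set hfun := fun τ => (1 - τ) * (-(gf' P0 P1 τ) / gf P0 P1 τ) with hhfun
  have hcont : ContinuousAt hfun τs := by
    apply ContinuousAt.mul
    · exact (continuous_const.sub continuous_id).continuousAt
    · apply ContinuousAt.div
      · exact ((continuous_gf' P0 P1).neg).continuousAt
      · exact (continuous_gf P0 P1).continuousAt
      · exact (gf_pos P0 P1 h10 hs1 τs).ne'
  have hzero : hfun τs = 0 := by
    rcases hτs_Icc.2.lt_or_eq with h | h
    · -- interior minimum: derivative vanishes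
      have hloc : IsLocalMin (gf P0 P1) τs := by
        apply IsMinOn.isLocalMin (s := Set.Icc (0:ℝ) 1)
        · apply isMinOn_iff.2
          intro x hx
          rw [hgτs]
          exact hmin x hx
        · exact Icc_mem_nhds hτs_pos h
      have : deriv (gf P0 P1) τs = 0 := hloc.deriv_eq_zero
      rw [(hasDerivAt_gf P0 P1 τs).deriv] at this
      simp [hhfun, this]
    · simp [hhfun, h]
  -- pick τ' slightly to the left of τs
  have hne : (𝓝[<] τs).NeBot := nhdsWithin_Iio_self_neBot' ⟨0, hτs_pos⟩
  have hev1 : ∀ᶠ τ in 𝓝[<] τs, hfun τ < γ := by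
    have h1 : Filter.Tendsto hfun (𝓝 τs) (𝓝 0) := by
      rw [← hzero]
      exact hcont
    exact (h1.eventually (gt_mem_nhds hγ)).filter_mono nhdsWithin_le_nhds
  have hev2 : ∀ᶠ τ in 𝓝[<] τs, τ ∈ Set.Ioo 0 τs :=
    Ioo_mem_nhdsLT_of_mem ⟨hτs_pos, le_refl τs⟩
  obtain ⟨τ', hτ'1, hτ'2⟩ := (hev1.and hev2).exists
  refine ⟨τ', ⟨hτ'2.1, lt_of_lt_of_le hτ'2.2 hτs_Icc.2⟩, hg'_neg τ' hτ'2, hτ'1⟩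


/-! ### Chebyshev inequality for the product measure -/

lemma cheb (q f : α → ℝ) (hq0 : ∀ y, 0 ≤ q y) (hq1 : ∑ y, q y = 1)
    (hf : ∑ y, q y * f y = 0) (k : ℕ) (a : ℝ) (ha : 0 < a) :
    1 - (k * ∑ y, q y * f y ^ 2) / a ^ 2
      ≤ ∑ z ∈ Finset.univ.filter
          (fun z : Fin k → α => (∀ i, 0 < q (z i)) ∧ |∑ i, f (z i)| ≤ a),
          ∏ i, q (z i) := by
  set p := fun z : Fin k → α => (∀ i, 0 < q (z i)) ∧ |∑ i, f (z i)| ≤ a with hp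
  have hsplit := Finset.sum_filter_add_sum_filter_not Finset.univ p
    (fun z : Fin k → α => ∏ i, q (z i))
  have hbad : ∑ z ∈ Finset.univ.filter (fun z => ¬ p z), ∏ i, q (z i)
      ≤ (k * ∑ y, q y * f y ^ 2) / a ^ 2 := by
    have hterm : ∀ z ∈ Finset.univ.filter (fun z : Fin k → α => ¬ p z),
        ∏ i, q (z i) ≤ (∏ i, q (z i)) * (∑ i, f (z i)) ^ 2 / a ^ 2 := by
      intro z hz
      rw [Finset.mem_filter] at hz
      have hz' : ¬ ((∀ i, 0 < q (z i)) ∧ |∑ i, f (z i)| ≤ a) := hz.2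
      push_neg at hz'
      by_cases hall : ∀ i, 0 < q (z i)
      · have habs2 : a < |∑ i, f (z i)| := hz' hall
        have h1 : a ^ 2 ≤ (∑ i, f (z i)) ^ 2 := by
          rw [← sq_abs (∑ i, f (z i))]
          exact pow_le_pow_left₀ ha.le habs2.le 2
        have h2 : (1:ℝ) ≤ (∑ i, f (z i)) ^ 2 / a ^ 2 := by
          rw [le_div_iff₀ (by positivity)]
          linarith
        calc ∏ i, q (z i) = (∏ i, q (z i)) * 1 := (mul_one _).symm
          _ ≤ (∏ i, q (z i)) * ((∑ i, f (z i)) ^ 2 / a ^ 2) :=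
            mul_le_mul_of_nonneg_left h2 (Finset.prod_nonneg fun i _ => hq0 (z i))
          _ = (∏ i, q (z i)) * (∑ i, f (z i)) ^ 2 / a ^ 2 := by ring
      · push_neg at hall
        obtain ⟨i, hi⟩ := hall
        have hqi : q (z i) = 0 := le_antisymm hi (hq0 (z i))
        have hzero : ∏ i, q (z i) = 0 := Finset.prod_eq_zero (Finset.mem_univ i) hqi
        rw [hzero, zero_mul, zero_div]
    calc ∑ z ∈ Finset.univ.filter (fun z => ¬ p z), ∏ i, q (z i)
        ≤ ∑ z ∈ Finset.univ.filter (fun z : Fin k → α => ¬ p z),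
            (∏ i, q (z i)) * (∑ i, f (z i)) ^ 2 / a ^ 2 := Finset.sum_le_sum hterm
      _ ≤ ∑ z : Fin k → α, (∏ i, q (z i)) * (∑ i, f (z i)) ^ 2 / a ^ 2 :=
          Finset.sum_le_sum_of_subset_of_nonneg (Finset.filter_subset _ _)
            (fun z _ _ => div_nonneg (mul_nonneg
              (Finset.prod_nonneg fun i _ => hq0 (z i)) (sq_nonneg _)) (sq_nonneg a))
      _ = (∑ z : Fin k → α, (∏ i, q (z i)) * (∑ i, f (z i)) ^ 2) / a ^ 2 := by
          rw [Finset.sum_div]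
      _ = (k * ∑ y, q y * f y ^ 2) / a ^ 2 := by rw [prodm_sum_sq q f hq1 hf k]
  have huniv : ∑ z : Fin k → α, ∏ i, q (z i) = 1 := prodm_sum_prod q hq1 k
  have heq : ∑ z ∈ Finset.univ.filter p, ∏ i, q (z i)
      = 1 - ∑ z ∈ Finset.univ.filter (fun z => ¬ p z), ∏ i, q (z i) := by
    rw [← huniv, ← hsplit]; ring
  rw [heq]
  linarith

/-! ### The per-sample-size lower bound -/

lemma lrErr_lower (P0 P1 : α → ℝ) (h00 : ∀ z, 0 ≤ P0 z) (h10 : ∀ z, 0 ≤ P1 z)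
    (hs0 : ∑ z, P0 z = 1) (hs1 : ∑ z, P1 z = 1) (habs : ∀ z, P0 z = 0 → P1 z = 0)
    (hD : 0 < chernoffInfo P0 P1) (γ : ℝ) (hγ : 0 < γ) :
    ∃ k₀ : ℕ, ∀ k : ℕ, k₀ ≤ k →
      Real.exp (-(k * (chernoffInfo P0 P1 + γ))) ≤ lrErrP P0 P1 k := by
  obtain ⟨y₀, hy0, hy1⟩ := exists_pos P0 P1 h00 h10 hs1 habs
  obtain ⟨τ', hτ'Ioo, hg'neg, hloss⟩ :=
    exists_tilt P0 P1 h00 h10 hs0 hs1 habs hD (γ/4) (by positivity)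
  set g := gf P0 P1 τ' with hgdef
  have hgpos : 0 < g := gf_pos P0 P1 h10 hs1 τ'
  set μ := -(gf' P0 P1 τ') / g with hμdef
  have hμpos : 0 < μ := div_pos (neg_pos.2 hg'neg) hgpos
  have hloss' : (1 - τ') * μ < γ/4 := hloss
  set q : α → ℝ := fun y =>
    if y ∈ Sset P1 then P1 y * Real.exp (τ' * rf P0 P1 y) / g else 0 with hqdef
  set ℓ : α → ℝ := fun y => -(rf P0 P1 y) with hℓdef
  have hq0 : ∀ y, 0 ≤ q y := by
    intro y
    rw [hqdef]
    dsimp only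
    split
    · rename_i h
      have := mem_Sset.1 h
      positivity
    · exact le_refl 0
  have hq_posS : ∀ y, 0 < q y ↔ y ∈ Sset P1 := by
    intro y
    rw [hqdef]
    dsimp only
    split
    · rename_i h
      have := mem_Sset.1 h
      exact ⟨fun _ => h, fun _ => by positivity⟩
    · rename_i h
      exact ⟨fun h' => absurd rfl h'.ne, fun h' => absurd h' h⟩
  have hq1 : ∑ y, q y = 1 := by
    rw [hqdef]
    dsimp only
    rw [Finset.sum_ite_mem, Finset.univ_inter, ← Finset.sum_div]
    rw [div_eq_one_iff_eq hgpos.ne']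
    rw [hgdef]
    rfl
  have hμeq : ∑ y, q y * ℓ y = μ := by
    rw [hqdef, hℓdef, hμdef]
    dsimp only
    have e1 : ∀ y, (if y ∈ Sset P1 then P1 y * Real.exp (τ' * rf P0 P1 y) / g else 0)
        * -(rf P0 P1 y)
        = if y ∈ Sset P1 then -(P1 y * rf P0 P1 y * Real.exp (τ' * rf P0 P1 y)) / g else 0 := by
      intro y
      split
      · ring
      · ring
    rw [Finset.sum_congr rfl (fun y _ => e1 y), Finset.sum_ite_mem, Finset.univ_inter,
      ← Finset.sum_div, Finset.sum_neg_distrib]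
    congr 1
  set f : α → ℝ := fun y => ℓ y - μ with hfdef
  have hfsum : ∑ y, q y * f y = 0 := by
    rw [hfdef]
    dsimp only
    have e2 : ∀ y, q y * (ℓ y - μ) = q y * ℓ y - q y * μ := fun y => by ring
    rw [Finset.sum_congr rfl (fun y _ => e2 y), Finset.sum_sub_distrib, hμeq, ← Finset.sum_mul,
      hq1]
    ring
  set V := ∑ y, q y * f y ^ 2 with hVdef
  have hV0 : 0 ≤ V := Finset.sum_nonneg fun y _ => mul_nonneg (hq0 y) (sq_nonneg _)
  have hcoord : ∀ y ∈ Sset P1, P0 y = g * q y * Real.exp ((1-τ') * rf P0 P1 y) := by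
    intro y hy
    have h1 : 0 < P1 y := mem_Sset.1 hy
    have h0 : 0 < P0 y := P0_pos_of_mem_Sset h00 habs hy
    rw [hqdef]
    dsimp only
    rw [if_pos hy]
    have e0 : g * (P1 y * Real.exp (τ' * rf P0 P1 y) / g)
        = P1 y * Real.exp (τ' * rf P0 P1 y) := by
      field_simp
    rw [e0, mul_assoc, ← Real.exp_add]
    have e3 : τ' * rf P0 P1 y + (1-τ') * rf P0 P1 y = rf P0 P1 y := by ring
    rw [e3]
    have e4 : Real.exp (rf P0 P1 y) = P0 y / P1 y := by
      rw [rf, Real.exp_sub, Real.exp_log h0, Real.exp_log h1]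
    rw [e4]
    field_simp
  -- the exponential lower bound for g
  have hgD : Real.exp (-chernoffInfo P0 P1) ≤ g := by
    rw [hgdef, gf_eq_Zf P0 P1 h00 h10 habs hτ'Ioo.1 hτ'Ioo.2]
    exact exp_negD_le_Zf P0 P1 y₀ hy0 hy1 h00 h10 τ' ⟨hτ'Ioo.1.le, hτ'Ioo.2.le⟩
  -- choice of k₀
  set k₀ : ℕ := max (⌈2*V/μ^2⌉₊ + 1) (⌈2*Real.log 2/γ⌉₊ + 1) with hk₀def
  refine ⟨k₀, ?_⟩
  intro k hk
  have hk1 : 1 ≤ k := le_trans (le_trans (Nat.le_add_left 1 _) (le_max_left _ _)) hk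
  have hkR : (k:ℝ) ≥ 1 := by exact_mod_cast hk1
  have hkV : 2*V/μ^2 ≤ (k:ℝ) := by
    have h1 : (⌈2*V/μ^2⌉₊ + 1 : ℕ) ≤ k := le_trans (le_max_left _ _) hk
    have h2 : ((⌈2*V/μ^2⌉₊ : ℕ) : ℝ) ≤ (k:ℝ) := by
      exact_mod_cast le_trans (Nat.le_succ _) h1
    exact le_trans (Nat.le_ceil _) h2
  have hkγ : 2*Real.log 2/γ ≤ (k:ℝ) := by
    have h1 : (⌈2*Real.log 2/γ⌉₊ + 1 : ℕ) ≤ k := le_trans (le_max_right _ _) hk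
    have h2 : ((⌈2*Real.log 2/γ⌉₊ : ℕ) : ℝ) ≤ (k:ℝ) := by
      exact_mod_cast le_trans (Nat.le_succ _) h1
    exact le_trans (Nat.le_ceil _) h2
  have hkμ : 0 < (k:ℝ) * μ := by positivity
  -- Chebyshev bound
  have hcheb := cheb q f hq0 hq1 hfsum k ((k:ℝ)*μ) hkμ
  have hhalf : (1:ℝ)/2 ≤ 1 - ((k:ℝ) * V) / ((k:ℝ)*μ)^2 := by
    have e5 : ((k:ℝ) * V) / ((k:ℝ)*μ)^2 = (V/μ^2) / k := by
      field_simp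
    rw [e5]
    have h6 : (V/μ^2) / (k:ℝ) ≤ 1/2 := by
      rw [div_le_iff₀ (by positivity : (0:ℝ) < μ^2)] at hkV
      rw [div_le_iff₀ (by positivity : (0:ℝ) < (k:ℝ)),
        div_le_iff₀ (by positivity : (0:ℝ) < μ^2)]
      linarith
    linarith
  set G := Finset.univ.filter
    (fun z : Fin k → α => (∀ i, 0 < q (z i)) ∧ |∑ i, f (z i)| ≤ (k:ℝ)*μ) with hGdef
  have hGq : (1:ℝ)/2 ≤ ∑ z ∈ G, ∏ i, q (z i) := le_trans hhalf hcheb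
  -- facts about elements of G
  have hGfacts : ∀ z ∈ G, (∀ i, z i ∈ Sset P1) ∧
      0 ≤ ∑ i, ℓ (z i) ∧ ∑ i, ℓ (z i) ≤ 2*(k:ℝ)*μ := by
    intro z hz
    rw [hGdef, Finset.mem_filter] at hz
    have hzS : ∀ i, z i ∈ Sset P1 := fun i => (hq_posS _).1 (hz.2.1 i)
    have hsumf : ∑ i, f (z i) = (∑ i, ℓ (z i)) - (k:ℝ)*μ := by
      rw [hfdef]
      dsimp only
      rw [Finset.sum_sub_distrib, Finset.sum_const, Finset.card_univ, Fintype.card_fin,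
        nsmul_eq_mul]
    have habs3 := abs_le.1 hz.2.2
    rw [hsumf] at habs3
    exact ⟨hzS, by linarith [habs3.1], by linarith [habs3.2]⟩
  -- change of measure identity on G
  have hCOM : ∀ z ∈ G, ∏ i, P0 (z i)
      = g^k * (∏ i, q (z i)) * Real.exp ((1-τ') * ∑ i, rf P0 P1 (z i)) := by
    intro z hz
    obtain ⟨hzS, -, -⟩ := hGfacts z hz
    calc ∏ i, P0 (z i)
        = ∏ i, (g * q (z i) * Real.exp ((1-τ') * rf P0 P1 (z i))) :=
          Finset.prod_congr rfl fun i _ => hcoord (z i) (hzS i)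
      _ = (∏ _i : Fin k, g) * (∏ i, q (z i))
            * ∏ i, Real.exp ((1-τ') * rf P0 P1 (z i)) := by
          rw [← Finset.prod_mul_distrib, ← Finset.prod_mul_distrib]
      _ = g^k * (∏ i, q (z i)) * Real.exp ((1-τ') * ∑ i, rf P0 P1 (z i)) := by
          rw [Finset.prod_const, Finset.card_univ, Fintype.card_fin]
          congr 1
          rw [Finset.mul_sum, Real.exp_sum]
  -- sum of r in terms of sum of ℓ
  have hrsum : ∀ z : Fin k → α, ∑ i, rf P0 P1 (z i) = -∑ i, ℓ (z i) := by
    intro z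
    rw [hℓdef]
    dsimp only
    rw [Finset.sum_neg_distrib, neg_neg]
  -- membership of G in the likelihood-ratio event
  have hGsub : G ⊆ Finset.univ.filter
      (fun z : Fin k → α => ∏ i, P0 (z i) ≤ ∏ i, P1 (z i)) := by
    intro z hz
    obtain ⟨hzS, hL0, -⟩ := hGfacts z hz
    rw [Finset.mem_filter]
    refine ⟨Finset.mem_univ z, ?_⟩
    have hpos0 : ∀ i : Fin k, 0 < P0 (z i) := fun i => P0_pos_of_mem_Sset h00 habs (hzS i)
    have hpos1 : ∀ i : Fin k, 0 < P1 (z i) := fun i => mem_Sset.1 (hzS i)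
    have hprod0 : 0 < ∏ i, P0 (z i) := Finset.prod_pos fun i _ => hpos0 i
    have hprod1 : 0 < ∏ i, P1 (z i) := Finset.prod_pos fun i _ => hpos1 i
    rw [← Real.log_le_log_iff hprod0 hprod1]
    rw [Real.log_prod (fun i _ => (hpos0 i).ne'), Real.log_prod (fun i _ => (hpos1 i).ne')]
    have e6 : ∑ i, ℓ (z i) = (∑ i, Real.log (P1 (z i))) - ∑ i, Real.log (P0 (z i)) := by
      rw [← Finset.sum_sub_distrib]
      apply Finset.sum_congr rfl
      intro i _
      rw [hℓdef]
      dsimp only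
      rw [rf, neg_sub]
    linarith [hL0]
  -- per-element lower bound on G
  have hbound : ∀ z ∈ G, g^k * Real.exp (-(γ/2)*(k:ℝ)) * (∏ i, q (z i)) ≤ ∏ i, P0 (z i) := by
    intro z hz
    obtain ⟨-, hL0, hL2⟩ := hGfacts z hz
    rw [hCOM z hz, hrsum z]
    have hqz : 0 ≤ ∏ i, q (z i) := Finset.prod_nonneg fun i _ => hq0 (z i)
    have h1τ : (0:ℝ) ≤ 1 - τ' := by linarith [hτ'Ioo.2]
    have hexp : Real.exp (-(γ/2)*(k:ℝ)) ≤ Real.exp ((1-τ') * -∑ i, ℓ (z i)) := by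
      apply Real.exp_le_exp.2
      have h7 : (1-τ') * (∑ i, ℓ (z i)) ≤ (1-τ') * (2*(k:ℝ)*μ) :=
        mul_le_mul_of_nonneg_left hL2 h1τ
      have h8 : (1-τ') * (2*(k:ℝ)*μ) ≤ (γ/2)*(k:ℝ) := by
        nlinarith [mul_le_mul_of_nonneg_left hloss'.le (show (0:ℝ) ≤ 2*(k:ℝ) by positivity)]
      have h9 : (1-τ') * -∑ i, ℓ (z i) = -((1-τ') * ∑ i, ℓ (z i)) := by ring
      rw [h9]
      linarith
    calc g^k * Real.exp (-(γ/2)*(k:ℝ)) * (∏ i, q (z i))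
        = (g^k * (∏ i, q (z i))) * Real.exp (-(γ/2)*(k:ℝ)) := by ring
      _ ≤ (g^k * (∏ i, q (z i))) * Real.exp ((1-τ') * -∑ i, ℓ (z i)) :=
          mul_le_mul_of_nonneg_left hexp (mul_nonneg (pow_nonneg hgpos.le k) hqz)
      _ = g^k * (∏ i, q (z i)) * Real.exp ((1-τ') * -∑ i, ℓ (z i)) := by ring
  have hsum1 : ∑ z ∈ G, g^k * Real.exp (-(γ/2)*(k:ℝ)) * (∏ i, q (z i))
      ≤ ∑ z ∈ G, ∏ i, P0 (z i) := Finset.sum_le_sum hbound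
  have hsum2 : ∑ z ∈ G, ∏ i, P0 (z i) ≤ lrErrP P0 P1 k := by
    unfold lrErrP
    exact Finset.sum_le_sum_of_subset_of_nonneg hGsub
      (fun z _ _ => Finset.prod_nonneg fun i _ => h00 (z i))
  have hsum3 : g^k * Real.exp (-(γ/2)*(k:ℝ)) * (1/2)
      ≤ ∑ z ∈ G, g^k * Real.exp (-(γ/2)*(k:ℝ)) * (∏ i, q (z i)) := by
    rw [← Finset.mul_sum]
    exact mul_le_mul_of_nonneg_left hGq (by positivity)
  -- constants
  have hA : Real.exp ((k:ℝ) * -chernoffInfo P0 P1) ≤ g^k := by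
    rw [Real.exp_nat_mul]
    exact pow_le_pow_left₀ (Real.exp_pos _).le hgD k
  have hC : Real.exp (-(γ/2)*(k:ℝ)) ≤ 1/2 := by
    rw [div_le_iff₀ hγ] at hkγ
    have h10 : -(γ/2)*(k:ℝ) ≤ -Real.log 2 := by linarith
    calc Real.exp (-(γ/2)*(k:ℝ)) ≤ Real.exp (-Real.log 2) := Real.exp_le_exp.2 h10
      _ = 1/2 := by
          rw [Real.exp_neg, Real.exp_log (by norm_num : (0:ℝ) < 2)]
          norm_num
  have hsplit2 : Real.exp (-((k:ℝ)*(chernoffInfo P0 P1+γ)))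
      = Real.exp ((k:ℝ) * -chernoffInfo P0 P1) * Real.exp (-(γ/2)*(k:ℝ))
        * Real.exp (-(γ/2)*(k:ℝ)) := by
    rw [← Real.exp_add, ← Real.exp_add]
    congr 1
    ring
  calc Real.exp (-((k:ℝ)*(chernoffInfo P0 P1+γ)))
      = Real.exp ((k:ℝ) * -chernoffInfo P0 P1) * Real.exp (-(γ/2)*(k:ℝ))
        * Real.exp (-(γ/2)*(k:ℝ)) := hsplit2
    _ ≤ g^k * Real.exp (-(γ/2)*(k:ℝ)) * (1/2) := by
        apply mul_le_mul _ hC (Real.exp_pos _).le (by positivity)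
        exact mul_le_mul_of_nonneg_right hA (Real.exp_pos _).le
    _ ≤ ∑ z ∈ G, g^k * Real.exp (-(γ/2)*(k:ℝ)) * (∏ i, q (z i)) := hsum3
    _ ≤ ∑ z ∈ G, ∏ i, P0 (z i) := hsum1
    _ ≤ lrErrP P0 P1 k := hsum2

/-! ### Poisson assembly -/

lemma poisson_mul_pow_eq (N ρ : ℝ) (k : ℕ) :
    poissonP N k * ρ ^ k = Real.exp (-N) * ((N*ρ) ^ k / (Nat.factorial k)) := by
  unfold poissonP
  rw [mul_pow]
  ring

lemma summable_poisson_mul (N ρ : ℝ) : Summable (fun k : ℕ => poissonP N k * ρ ^ k) := by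
  apply Summable.congr ((Real.summable_pow_div_factorial (N*ρ)).mul_left (Real.exp (-N)))
  intro k
  rw [poisson_mul_pow_eq]

lemma tsum_poisson_mul_pow (N ρ : ℝ) :
    ∑' k : ℕ, poissonP N k * ρ ^ k = Real.exp (-(N * (1 - ρ))) := by
  rw [tsum_congr (poisson_mul_pow_eq N ρ), tsum_mul_left, tsum_pow_div_factorial,
    ← Real.exp_add]
  congr 1
  ring

lemma lower_bound (P0 P1 : α → ℝ) (h00 : ∀ z, 0 ≤ P0 z) (h10 : ∀ z, 0 ≤ P1 z)
    (hs0 : ∑ z, P0 z = 1) (hs1 : ∑ z, P1 z = 1) (habs : ∀ z, P0 z = 0 → P1 z = 0)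
    (hD : 0 < chernoffInfo P0 P1) (ε : ℝ) (hε : 0 < ε) :
    ∃ N₀ : ℝ, ∀ N : ℝ, N₀ ≤ N →
        Real.exp (-((1+ε) * N * (1 - Real.exp (-chernoffInfo P0 P1))))
          ≤ ∑' k : ℕ, poissonP N k * lrErrP P0 P1 k := by
  set D := chernoffInfo P0 P1 with hDdef
  set β := Real.exp (-D) with hβdef
  have hβ0 : 0 < β := Real.exp_pos _
  have hβ1 : β < 1 := by
    rw [hβdef]
    exact Real.exp_lt_one_iff.2 (by linarith)
  set γ := (ε/2) * (1 - β) with hγdef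
  have hγ0 : 0 < γ := by
    rw [hγdef]
    have : 0 < 1 - β := by linarith
    positivity
  obtain ⟨k₀, hk₀⟩ := lrErr_lower P0 P1 h00 h10 hs0 hs1 habs hD γ hγ0
  set ρ := Real.exp (-(D + γ)) with hρdef
  have hρ0 : 0 < ρ := Real.exp_pos _
  have hρβ : ρ ≤ β := Real.exp_le_exp.2 (by linarith)
  have hβρ : β - ρ ≤ (ε/2) * (1-β) := by
    have e1 : ρ = β * Real.exp (-γ) := by
      rw [hρdef, hβdef, ← Real.exp_add]
      congr 1
      ring
    have e2 : 1 - γ ≤ Real.exp (-γ) := by linarith [Real.add_one_le_exp (-γ)]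
    have e3 : β - ρ ≤ β * γ := by nlinarith
    nlinarith
  set δ₀ := (ε/2) * (1-β) with hδ₀def
  have hδ₀0 : 0 < δ₀ := hγ0
  -- eventual fact 1
  have hE1 : ∀ᶠ N in atTop, 2 * Real.exp (-((1+ε) * N * (1 - β))) ≤ Real.exp (-(N*(1-ρ))) := by
    rw [Filter.eventually_atTop]
    refine ⟨max 0 (Real.log 2 / δ₀), fun N hN => ?_⟩
    have hN0 : 0 ≤ N := le_trans (le_max_left _ _) hN
    have hN1 : Real.log 2 / δ₀ ≤ N := le_trans (le_max_right _ _) hN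
    have hlog2 : Real.log 2 ≤ N * δ₀ := by
      rw [div_le_iff₀ hδ₀0] at hN1
      linarith
    have e7 : 2 * Real.exp (-((1+ε)*N*(1-β))) = Real.exp (Real.log 2 + -((1+ε)*N*(1-β))) := by
      rw [Real.exp_add, Real.exp_log (by norm_num : (0:ℝ) < 2)]
    rw [e7]
    apply Real.exp_le_exp.2
    -- log 2 - (1+ε)N(1-β) ≤ -N(1-ρ)
    have key : N * δ₀ ≤ N * ((1+ε)*(1-β) - (1-ρ)) := by
      apply mul_le_mul_of_nonneg_left _ hN0
      rw [hδ₀def]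
      linarith [hβρ]
    nlinarith [hlog2, key]
  -- eventual fact 2
  have hE2 : ∀ᶠ N in atTop,
      2 * (∑ i ∈ Finset.range k₀, poissonP N i * ρ^i) ≤ Real.exp (-(N*(1-ρ))) := by
    have hten : Filter.Tendsto
        (fun x : ℝ => ∑ i ∈ Finset.range k₀, (2 / (Nat.factorial i)) * (x^i * Real.exp (-x)))
        atTop (nhds 0) := by
      have h0 : (0:ℝ) = ∑ i ∈ Finset.range k₀, (0:ℝ) := by simp
      rw [h0]
      apply tendsto_finset_sum
      intro i _
      simpa using (Real.tendsto_pow_mul_exp_neg_atTop_nhds_zero i).const_mul (2 / (Nat.factorial i : ℝ))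
    have hcomp : Filter.Tendsto (fun N : ℝ => N * ρ) atTop atTop :=
      Filter.tendsto_id.atTop_mul_const hρ0
    have hev := (hten.comp hcomp).eventually (gt_mem_nhds one_pos)
    filter_upwards [hev] with N hN
    simp only [Function.comp] at hN
    -- hN : Σ_i (2/i!) ((Nρ)^i e^{-Nρ}) < 1
    have hBeq : 2 * (∑ i ∈ Finset.range k₀, poissonP N i * ρ^i)
        = Real.exp (-N) * ∑ i ∈ Finset.range k₀, 2 * ((N*ρ)^i / (Nat.factorial i)) := by
      rw [Finset.mul_sum, Finset.mul_sum]
      apply Finset.sum_congr rfl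
      intro i _
      rw [poisson_mul_pow_eq]
      ring
    have hAeq : Real.exp (-(N*(1-ρ))) = Real.exp (-N) * Real.exp (N*ρ) := by
      rw [← Real.exp_add]
      congr 1
      ring
    rw [hBeq, hAeq]
    apply mul_le_mul_of_nonneg_left _ (Real.exp_pos (-N)).le
    -- Σ 2 (Nρ)^i/i! ≤ e^{Nρ}
    have e8 : ∑ i ∈ Finset.range k₀, 2 * ((N*ρ)^i / (Nat.factorial i))
        = (∑ i ∈ Finset.range k₀, (2 / (Nat.factorial i)) * ((N*ρ)^i * Real.exp (-(N*ρ))))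
          * Real.exp (N*ρ) := by
      rw [Finset.sum_mul]
      apply Finset.sum_congr rfl
      intro i _
      rw [mul_assoc, mul_assoc, ← Real.exp_add]
      simp
      ring
    rw [e8]
    calc (∑ i ∈ Finset.range k₀, (2 / (Nat.factorial i)) * ((N*ρ)^i * Real.exp (-(N*ρ))))
          * Real.exp (N*ρ)
        ≤ 1 * Real.exp (N*ρ) := mul_le_mul_of_nonneg_right hN.le (Real.exp_pos _).le
      _ = Real.exp (N*ρ) := one_mul _
  have hE3 : ∀ᶠ N : ℝ in atTop, (0:ℝ) ≤ N := Filter.eventually_ge_atTop 0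
  obtain ⟨N₀, hN₀⟩ := Filter.eventually_atTop.1 ((hE1.and hE2).and hE3)
  refine ⟨N₀, fun N hN => ?_⟩
  obtain ⟨⟨h1, h2⟩, hNpos⟩ := hN₀ N hN
  -- summability facts
  have hsρ : Summable (fun k : ℕ => poissonP N k * ρ^k) := summable_poisson_mul N ρ
  set h : ℕ → ℝ := fun k => if k < k₀ then 0 else poissonP N k * ρ^k with hhdef
  have hh0 : ∀ k, 0 ≤ h k := by
    intro k
    rw [hhdef]
    dsimp only
    split
    · exact le_refl 0
    · exact mul_nonneg (poissonP_nonneg hNpos k) (pow_nonneg hρ0.le k)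
  have hh_leρ : ∀ k, h k ≤ poissonP N k * ρ^k := by
    intro k
    rw [hhdef]
    dsimp only
    split
    · exact mul_nonneg (poissonP_nonneg hNpos k) (pow_nonneg hρ0.le k)
    · exact le_refl _
  have hhs : Summable h := hsρ.of_nonneg_of_le hh0 hh_leρ
  have hh_le : ∀ k, h k ≤ poissonP N k * lrErrP P0 P1 k := by
    intro k
    rw [hhdef]
    dsimp only
    split
    · exact mul_nonneg (poissonP_nonneg hNpos k) (lrErrP_nonneg P0 P1 h00 k)
    · rename_i hk
      push_neg at hk
      apply mul_le_mul_of_nonneg_left _ (poissonP_nonneg hNpos k)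
      calc ρ^k = Real.exp (-((k:ℝ)*(D+γ))) := by
            rw [hρdef, ← Real.exp_nat_mul]
            congr 1
            ring
        _ ≤ lrErrP P0 P1 k := hk₀ k hk
  have hfs : Summable (fun k : ℕ => poissonP N k * lrErrP P0 P1 k) :=
    (summable_poisson_mul N β).of_nonneg_of_le
      (fun k => mul_nonneg (poissonP_nonneg hNpos k) (lrErrP_nonneg P0 P1 h00 k))
      (fun k => mul_le_mul_of_nonneg_left (lrErrP_le_exp P0 P1 h00 h10 hs1 habs k)
        (poissonP_nonneg hNpos k))
  have step1 : ∑' k, h k ≤ ∑' k : ℕ, poissonP N k * lrErrP P0 P1 k :=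
    Summable.tsum_le_tsum hh_le hhs hfs
  -- compute ∑' h
  have hsplitA := Summable.sum_add_tsum_nat_add k₀ hsρ
  have hsplith := Summable.sum_add_tsum_nat_add k₀ hhs
  have htail : ∀ i : ℕ, h (i + k₀) = poissonP N (i+k₀) * ρ^(i+k₀) := by
    intro i
    rw [hhdef]
    dsimp only
    rw [if_neg (by omega)]
  have hrange : ∑ i ∈ Finset.range k₀, h i = 0 := by
    apply Finset.sum_eq_zero
    intro i hi
    rw [hhdef]
    dsimp only
    rw [if_pos (Finset.mem_range.1 hi)]
  have htsum_h : ∑' k, h k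
      = Real.exp (-(N*(1-ρ))) - ∑ i ∈ Finset.range k₀, poissonP N i * ρ^i := by
    have e9 : ∑' i : ℕ, h (i+k₀) = ∑' i : ℕ, poissonP N (i+k₀) * ρ^(i+k₀) := tsum_congr htail
    rw [tsum_poisson_mul_pow N ρ] at hsplitA
    rw [hrange, zero_add] at hsplith
    rw [← hsplith, e9]
    linarith [hsplitA]
  have hB0 : 0 ≤ ∑ i ∈ Finset.range k₀, poissonP N i * ρ^i :=
    Finset.sum_nonneg fun i _ =>
      mul_nonneg (poissonP_nonneg hNpos i) (pow_nonneg hρ0.le i)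
  -- conclude
  have : Real.exp (-((1+ε)*N*(1-β)))
      ≤ Real.exp (-(N*(1-ρ))) - ∑ i ∈ Finset.range k₀, poissonP N i * ρ^i := by
    linarith [h1, h2]
  linarith [step1, htsum_h, this]

end Chernoff11

/-- Fix `ε > 0`, and let `P₀, P₁` be distributions on a fixed finite alphabet
with Chernoff information `D* = D(P₀,P₁) > 0` and `max_z P₁(z)/P₀(z) < ∞`. With a
`Poisson(N)`-distributed sample size, the `P₀`-probability that the likelihood ratio favours
`P₁` is at most `exp(−N(1 − e^{−D*}))`, and for all sufficiently large `N` it is at least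
`exp(−(1+ε)·N·(1 − e^{−D*}))`. -/
theorem chernoff_likelihood_ratio_poisson_bounds {α : Type*} [Fintype α] (ε : ℝ) (hε : 0 < ε)
    (P0 P1 : α → ℝ) (h00 : ∀ z, 0 ≤ P0 z) (h10 : ∀ z, 0 ≤ P1 z)
    (hs0 : ∑ z, P0 z = 1) (hs1 : ∑ z, P1 z = 1)
    (habs : ∀ z, P0 z = 0 → P1 z = 0)
    (hD : 0 < chernoffInfo P0 P1) :
    (∀ N : ℝ, 0 ≤ N →
        (∑' k : ℕ, poissonP N k * lrErrP P0 P1 k)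
          ≤ Real.exp (-(N * (1 - Real.exp (-chernoffInfo P0 P1))))) ∧
    (∃ N₀ : ℝ, ∀ N : ℝ, N₀ ≤ N →
        Real.exp (-((1+ε) * N * (1 - Real.exp (-chernoffInfo P0 P1))))
          ≤ ∑' k : ℕ, poissonP N k * lrErrP P0 P1 k) := by
  constructor
  · intro N hN
    exact Chernoff11.upper_bound P0 P1 h00 h10 hs1 habs N hN
  · exact Chernoff11.lower_bound P0 P1 h00 h10 hs0 hs1 habs hD ε hε
end
end

section
/- Fix any ε > 0 and any 0 < θ < 1/2. Let N ~ Poisson(λ) and, conditional on N, let Z_1,…,Z_N be independent Bernoulli(θ) random variables. Then P{ Σ_{i=1}^N Z_i ≥ N/2 − ελ } ≤ exp( ε · 2·log((1−θ)/θ) · λ ) · exp{ −λ·(1 − e^{−KL(0.5‖θ)}) }. -/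
open Filter

noncomputable section
attribute [local instance] Classical.propDecidable

/-- Let `N ~ Poisson(λ)` and, conditional on `N`, let `Z₁,…,Z_N` be i.i.d.
`Bernoulli(θ)` (so conditional on `N = k`, `Σᵢ Zᵢ ~ Binomial(k,θ)`). Then
`P{Σᵢ Zᵢ ≥ N/2 − ελ} ≤ exp(ε·2·log((1−θ)/θ)·λ)·exp(−λ(1 − e^{−KL(0.5‖θ)}))`. -/
theorem poisson_binomial_shifted_majority_bound (ε θ lam : ℝ)
    (hε : 0 < ε) (hθ0 : 0 < θ) (hθ1 : θ < 1/2) (hlam : 0 ≤ lam) :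
    (∑' k : ℕ, poissonP lam k *
        ∑ j ∈ (Finset.range (k+1)).filter (fun j : ℕ => (k : ℝ)/2 - ε * lam ≤ (j : ℝ)),
          (k.choose j : ℝ) * θ ^ j * (1-θ) ^ (k - j))
      ≤ Real.exp (ε * (2 * Real.log ((1-θ)/θ)) * lam) *
        Real.exp (-(lam * (1 - Real.exp (-KLhalf θ)))) := by
  have h1θ : (0:ℝ) < 1 - θ := by linarith
  set t := Real.log ((1-θ)/θ) with ht
  have hq : (0:ℝ) < (1-θ)/θ := by positivity
  have hexp_t : Real.exp t = (1-θ)/θ := Real.exp_log hq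
  have ht0 : 0 ≤ t := Real.log_nonneg (by rw [le_div_iff₀ hθ0]; linarith)
  set a := Real.exp (-(t/2)) with ha
  have ha0 : 0 < a := Real.exp_pos _
  set r := 2*(1-θ)*a with hr
  have hr0 : 0 < r := by positivity
  clear_value t a r
  -- r = exp(-KLhalf θ)
  have hrKL : r = Real.exp (-KLhalf θ) := by
    have hlogr : Real.log r = -KLhalf θ := by
      rw [hr, Real.log_mul (by positivity) (ne_of_gt ha0),
        Real.log_mul (by norm_num) (ne_of_gt h1θ), ha, Real.log_exp, ht,
        Real.log_div (ne_of_gt h1θ) (ne_of_gt hθ0)]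
      unfold KLhalf
      rw [Real.log_div (by norm_num) (ne_of_gt hθ0),
        Real.log_div (by norm_num) (ne_of_gt h1θ)]
      have : Real.log 0.5 = -Real.log 2 := by
        rw [show (0.5:ℝ) = 2⁻¹ by norm_num, Real.log_inv]
      rw [this]; ring
    rw [← hlogr, Real.exp_log hr0]
  -- inner bound
  have inner_le : ∀ k : ℕ,
      (∑ j ∈ (Finset.range (k+1)).filter (fun j : ℕ => (k : ℝ)/2 - ε * lam ≤ (j : ℝ)),
          (k.choose j : ℝ) * θ ^ j * (1-θ) ^ (k - j))
        ≤ Real.exp (t * ε * lam) * r ^ k := by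
    intro k
    have hM0 : 0 ≤ Real.exp (t * ε * lam) * a ^ k * (1-θ) ^ k := by positivity
    have step1 : ∀ j ∈ (Finset.range (k+1)).filter
        (fun j : ℕ => (k : ℝ)/2 - ε * lam ≤ (j : ℝ)),
        (k.choose j : ℝ) * θ ^ j * (1-θ) ^ (k - j)
          ≤ (k.choose j : ℝ) * (Real.exp (t * ε * lam) * a ^ k * (1-θ) ^ k) := by
      intro j hj
      simp only [Finset.mem_filter, Finset.mem_range] at hj
      obtain ⟨hjk, hcond⟩ := hj
      have hjk' : j ≤ k := Nat.lt_succ_iff.mp hjk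
      have key : Real.exp (t * ((j:ℝ) - (k:ℝ)/2 + ε * lam)) * (θ ^ j * (1-θ) ^ (k - j))
          = Real.exp (t * ε * lam) * a ^ k * (1-θ) ^ k := by
        have e1 : t * ((j:ℝ) - (k:ℝ)/2 + ε * lam)
            = (j:ℝ) * t + (k:ℝ) * (-(t/2)) + t * ε * lam := by ring
        rw [e1, Real.exp_add, Real.exp_add, Real.exp_nat_mul, Real.exp_nat_mul, hexp_t, ← ha]
        have e2 : ((1-θ)/θ) ^ j * θ ^ j = (1-θ) ^ j := by
          rw [← mul_pow, div_mul_cancel₀ _ (ne_of_gt hθ0)]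
        have e3 : (1-θ) ^ j * (1-θ) ^ (k - j) = (1-θ) ^ k := by
          rw [← pow_add, Nat.add_sub_cancel' hjk']
        calc ((1-θ)/θ) ^ j * a ^ k * Real.exp (t * ε * lam) * (θ ^ j * (1-θ) ^ (k - j))
            = (((1-θ)/θ) ^ j * θ ^ j) * (1-θ) ^ (k-j) * a ^ k * Real.exp (t * ε * lam) := by
              ring
          _ = Real.exp (t * ε * lam) * a ^ k * (1-θ) ^ k := by rw [e2, e3]; ring
      have hge1 : (1:ℝ) ≤ Real.exp (t * ((j:ℝ) - (k:ℝ)/2 + ε * lam)) := by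
        apply Real.one_le_exp
        have : (0:ℝ) ≤ (j:ℝ) - (k:ℝ)/2 + ε * lam := by linarith
        positivity
      have hbase : (0:ℝ) ≤ θ ^ j * (1-θ) ^ (k - j) := by positivity
      have := mul_le_mul_of_nonneg_right hge1 hbase
      rw [one_mul] at this
      rw [key] at this
      calc (k.choose j : ℝ) * θ ^ j * (1-θ) ^ (k - j)
          = (k.choose j : ℝ) * (θ ^ j * (1-θ) ^ (k - j)) := by ring
        _ ≤ (k.choose j : ℝ) * (Real.exp (t * ε * lam) * a ^ k * (1-θ) ^ k) := by
            exact mul_le_mul_of_nonneg_left this (by positivity)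
    calc (∑ j ∈ (Finset.range (k+1)).filter
          (fun j : ℕ => (k : ℝ)/2 - ε * lam ≤ (j : ℝ)),
          (k.choose j : ℝ) * θ ^ j * (1-θ) ^ (k - j))
        ≤ ∑ j ∈ (Finset.range (k+1)).filter
            (fun j : ℕ => (k : ℝ)/2 - ε * lam ≤ (j : ℝ)),
            (k.choose j : ℝ) * (Real.exp (t * ε * lam) * a ^ k * (1-θ) ^ k) :=
          Finset.sum_le_sum step1
      _ ≤ ∑ j ∈ Finset.range (k+1),
            (k.choose j : ℝ) * (Real.exp (t * ε * lam) * a ^ k * (1-θ) ^ k) := by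
          apply Finset.sum_le_sum_of_subset_of_nonneg (Finset.filter_subset _ _)
          intro i _ _; positivity
      _ = (∑ j ∈ Finset.range (k+1), (k.choose j : ℝ)) *
            (Real.exp (t * ε * lam) * a ^ k * (1-θ) ^ k) := by
          rw [← Finset.sum_mul]
      _ = Real.exp (t * ε * lam) * r ^ k := by
          have : (∑ j ∈ Finset.range (k+1), (k.choose j : ℝ)) = 2 ^ k := by
            rw [← Nat.cast_sum, Nat.sum_range_choose]; push_cast; ring
          rw [this, hr, mul_pow, mul_pow]; ring
  have hP0 : ∀ k, 0 ≤ poissonP lam k := by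
    intro k; unfold poissonP; positivity
  have hS0 : ∀ k : ℕ, 0 ≤ (∑ j ∈ (Finset.range (k+1)).filter
      (fun j : ℕ => (k : ℝ)/2 - ε * lam ≤ (j : ℝ)),
      (k.choose j : ℝ) * θ ^ j * (1-θ) ^ (k - j)) := by
    intro k; apply Finset.sum_nonneg; intro j _; positivity
  -- right series
  have hRHSeq : (fun k : ℕ => poissonP lam k * (Real.exp (t * ε * lam) * r ^ k))
      = fun k : ℕ => (Real.exp (t * ε * lam) * Real.exp (-lam)) * ((lam*r) ^ k / (Nat.factorial k)) := by
    funext k; unfold poissonP; rw [mul_pow]; ring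
  have hsumRHS : Summable (fun k : ℕ => poissonP lam k * (Real.exp (t * ε * lam) * r ^ k)) := by
    rw [hRHSeq]; exact (Real.summable_pow_div_factorial (lam*r)).mul_left _
  have hsumLHS : Summable (fun k : ℕ => poissonP lam k *
      ∑ j ∈ (Finset.range (k+1)).filter (fun j : ℕ => (k : ℝ)/2 - ε * lam ≤ (j : ℝ)),
        (k.choose j : ℝ) * θ ^ j * (1-θ) ^ (k - j)) := by
    apply Summable.of_nonneg_of_le (fun k => mul_nonneg (hP0 k) (hS0 k))
      (fun k => mul_le_mul_of_nonneg_left (inner_le k) (hP0 k)) hsumRHS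
  have htsum : (∑' k : ℕ, poissonP lam k * (Real.exp (t * ε * lam) * r ^ k))
      = Real.exp (t * ε * lam) * Real.exp (-lam) * Real.exp (lam * r) := by
    rw [hRHSeq, tsum_mul_left]
    congr 1
    rw [Real.exp_eq_exp_ℝ, NormedSpace.exp_eq_tsum_div]
  have main : (∑' k : ℕ, poissonP lam k *
      ∑ j ∈ (Finset.range (k+1)).filter (fun j : ℕ => (k : ℝ)/2 - ε * lam ≤ (j : ℝ)),
        (k.choose j : ℝ) * θ ^ j * (1-θ) ^ (k - j))
      ≤ Real.exp (t * ε * lam) * Real.exp (-lam) * Real.exp (lam * r) := by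
    rw [← htsum]
    exact Summable.tsum_le_tsum (fun k => mul_le_mul_of_nonneg_left (inner_le k) (hP0 k)) hsumLHS hsumRHS
  refine main.trans ?_
  rw [hrKL, ← Real.exp_add, ← Real.exp_add, ← Real.exp_add]
  apply Real.exp_le_exp.mpr
  have : 0 ≤ t * ε * lam := by positivity
  nlinarith [this]
end
end

section
/- Suppose N ~ Poisson(ελ) for some 0 < ε < 1 and λ > 0. Then for any constant c_1 > 2e, P{ N ≥ c_1·λ / log(1/ε) } ≤ 2·exp{ −c_1·λ/2 }. -/
open Filter

noncomputable section
attribute [local instance] Classical.propDecidable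

lemma pow_self_le_factorial_mul_exp (n : ℕ) :
    (n : ℝ) ^ n ≤ (Nat.factorial n : ℝ) * Real.exp 1 ^ n := by
  have h := Real.sum_le_exp_of_nonneg (x := (n : ℝ)) (Nat.cast_nonneg n) (n + 1)
  have hsingle : (n : ℝ) ^ n / (Nat.factorial n : ℝ) ≤
      ∑ i ∈ Finset.range (n + 1), (n : ℝ) ^ i / (Nat.factorial i : ℝ) := by
    apply Finset.single_le_sum (f := fun i => (n : ℝ) ^ i / (Nat.factorial i : ℝ))
    · intro i _
      positivity
    · simp
  have hfac : (0 : ℝ) < (Nat.factorial n : ℝ) := by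
    exact_mod_cast (Nat.factorial_pos n)
  have hexp : Real.exp (n : ℝ) = Real.exp 1 ^ n := by
    rw [← Real.exp_nat_mul]; ring_nf
  have hh := hsingle.trans h
  rw [div_le_iff₀ hfac] at hh
  calc (n : ℝ) ^ n ≤ Real.exp (n : ℝ) * (Nat.factorial n : ℝ) := hh
    _ = (Nat.factorial n : ℝ) * Real.exp 1 ^ n := by rw [hexp]; ring

/-- If `N ~ Poisson(ελ)` with `0 < ε < 1`, `λ > 0`, then for any `c₁ > 2e`,
`P{N ≥ c₁λ/log(1/ε)} ≤ 2·exp(−c₁λ/2)`. -/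
theorem poisson_tail_bound (ε lam c₁ : ℝ) (hε0 : 0 < ε) (hε1 : ε < 1) (hlam : 0 < lam)
    (hc : 2 * Real.exp 1 < c₁) :
    (∑' k : ℕ, if c₁ * lam / Real.log (1/ε) ≤ (k : ℝ) then poissonP (ε * lam) k else 0)
      ≤ 2 * Real.exp (-(c₁ * lam / 2)) := by
  have he1 : (0 : ℝ) < Real.exp 1 := Real.exp_pos 1
  have hc0 : 0 < c₁ := lt_trans (by positivity) hc
  set L : ℝ := Real.log (1 / ε) with hLdef
  have hL : 0 < L := Real.log_pos (by rw [lt_div_iff₀ hε0]; linarith)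
  set μ : ℝ := ε * lam with hμdef
  have hμ : 0 < μ := mul_pos hε0 hlam
  set t : ℝ := c₁ * lam / L with htdef
  have ht : 0 < t := div_pos (mul_pos hc0 hlam) hL
  set r : ℝ := Real.exp 1 * μ / t with hrdef
  have hr0 : 0 < r := div_pos (mul_pos he1 hμ) ht
  have hrval : r = Real.exp 1 * ε * L / c₁ := by
    rw [hrdef, htdef, hμdef]
    field_simp
  have hεL : ε * L ≤ 1 := by
    have h1 : L ≤ 1 / ε - 1 := Real.log_le_sub_one_of_pos (by positivity)
    have h2 : ε * L ≤ ε * (1 / ε - 1) := by nlinarith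
    have h3 : ε * (1 / ε - 1) = 1 - ε := by field_simp
    nlinarith
  have hr2 : r ≤ 1 / 2 := by
    rw [hrval, div_le_iff₀ hc0]
    nlinarith
  have hr1 : r < 1 := hr2.trans_lt (by norm_num)
  have hrexp : r ≤ Real.exp (-(L / 2)) := by
    have hεe : ε = Real.exp (-L) := by
      rw [hLdef, Real.log_div one_ne_zero (ne_of_gt hε0), Real.log_one]
      rw [neg_sub, sub_zero, Real.exp_log hε0]
    have h1 : r ≤ ε * L / 2 := by
      rw [hrval, div_le_div_iff₀ hc0 (by norm_num)]
      nlinarith [mul_le_mul_of_nonneg_right hc.le (mul_pos hε0 hL).le]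
    have h2 : ε * L / 2 ≤ Real.exp (-(L / 2)) := by
      rw [hεe]
      have h3 : L / 2 ≤ Real.exp (L / 2) := by
        have := Real.add_one_le_exp (L / 2)
        linarith
      have h4 : Real.exp (-L) * L / 2 = Real.exp (-L) * (L / 2) := by ring
      rw [h4]
      have h5 : Real.exp (-L) * (L / 2) ≤ Real.exp (-L) * Real.exp (L / 2) :=
        mul_le_mul_of_nonneg_left h3 (Real.exp_pos _).le
      rw [← Real.exp_add] at h5
      have h6 : -L + L / 2 = -(L / 2) := by ring
      rwa [h6] at h5
    linarith
  set k₀ : ℕ := ⌈t⌉₊ with hk₀def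
  have htk₀ : t ≤ (k₀ : ℝ) := Nat.le_ceil t
  set f : ℕ → ℝ := fun k => if t ≤ (k : ℝ) then poissonP μ k else 0 with hfdef
  set g : ℕ → ℝ := fun k => if k₀ ≤ k then r ^ k else 0 with hgdef
  have hgnonneg : ∀ k, 0 ≤ g k := by
    intro k; rw [hgdef]; dsimp only
    split <;> positivity
  have hfnonneg : ∀ k, 0 ≤ f k := by
    intro k; rw [hfdef]; dsimp only
    split
    · unfold poissonP; positivity
    · exact le_refl 0
  have hfg : ∀ k, f k ≤ g k := by
    intro k
    rw [hfdef, hgdef]; dsimp only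
    by_cases hk : t ≤ (k : ℝ)
    · rw [if_pos hk, if_pos (Nat.ceil_le.mpr hk)]
      have hfac : (0 : ℝ) < (Nat.factorial k : ℝ) := by
        exact_mod_cast Nat.factorial_pos k
      have htk : t ^ k ≤ (Nat.factorial k : ℝ) * Real.exp 1 ^ k := by
        calc t ^ k ≤ (k : ℝ) ^ k := pow_le_pow_left₀ ht.le hk k
          _ ≤ (Nat.factorial k : ℝ) * Real.exp 1 ^ k := pow_self_le_factorial_mul_exp k
      have h1 : poissonP μ k ≤ μ ^ k / (Nat.factorial k : ℝ) := by
        unfold poissonP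
        have hle : Real.exp (-μ) * μ ^ k ≤ μ ^ k := by
          have hexp1 : Real.exp (-μ) ≤ 1 := Real.exp_le_one_iff.mpr (by linarith)
          nlinarith [pow_nonneg hμ.le k]
        have := mul_le_mul_of_nonneg_right hle
          (by positivity : (0:ℝ) ≤ ((Nat.factorial k : ℝ))⁻¹)
        simpa [div_eq_mul_inv] using this
      have h2 : μ ^ k / (Nat.factorial k : ℝ) ≤ r ^ k := by
        have hrk : r ^ k = (Real.exp 1 * μ) ^ k / t ^ k := by
          rw [hrdef, div_pow]
        rw [hrk, div_le_div_iff₀ hfac (by positivity)]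
        calc μ ^ k * t ^ k ≤ μ ^ k * ((Nat.factorial k : ℝ) * Real.exp 1 ^ k) :=
              mul_le_mul_of_nonneg_left htk (pow_nonneg hμ.le k)
          _ = (Real.exp 1 * μ) ^ k * (Nat.factorial k : ℝ) := by rw [mul_pow]; ring
      exact h1.trans h2
    · rw [if_neg hk]
      exact hgnonneg k
  have hgsummable : Summable g := by
    apply Summable.of_nonneg_of_le hgnonneg _ (summable_geometric_of_lt_one hr0.le hr1)
    intro k
    rw [hgdef]; dsimp only
    split
    · exact le_refl _
    · positivity
  have hfsummable : Summable f := Summable.of_nonneg_of_le hfnonneg hfg hgsummable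
  have hstep1 : (∑' k, f k) ≤ ∑' k, g k := Summable.tsum_le_tsum hfg hfsummable hgsummable
  have hgval : (∑' k, g k) = r ^ k₀ * (1 - r)⁻¹ := by
    have h := Summable.sum_add_tsum_nat_add (f := g) k₀ hgsummable
    have hzero : ∑ i ∈ Finset.range k₀, g i = 0 := by
      apply Finset.sum_eq_zero
      intro i hi
      have hi' := Finset.mem_range.mp hi
      rw [hgdef]; dsimp only
      rw [if_neg (by omega)]
    have hshift : ∀ i : ℕ, g (i + k₀) = r ^ k₀ * r ^ i := by
      intro i
      rw [hgdef]; dsimp only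
      rw [if_pos (Nat.le_add_left k₀ i), pow_add]
      ring
    rw [← h, hzero, zero_add]
    calc (∑' i, g (i + k₀)) = ∑' i, r ^ k₀ * r ^ i := tsum_congr hshift
      _ = r ^ k₀ * ∑' i, r ^ i := tsum_mul_left
      _ = r ^ k₀ * (1 - r)⁻¹ := by rw [tsum_geometric_of_lt_one hr0.le hr1]
  have hA : r ^ k₀ ≤ Real.exp (-(c₁ * lam / 2)) := by
    calc r ^ k₀ ≤ Real.exp (-(L / 2)) ^ k₀ := pow_le_pow_left₀ hr0.le hrexp k₀
      _ = Real.exp ((k₀ : ℝ) * -(L / 2)) := by rw [Real.exp_nat_mul]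
      _ ≤ Real.exp (-(c₁ * lam / 2)) := by
          apply Real.exp_le_exp.mpr
          have htL : t * L = c₁ * lam := by
            rw [htdef]; field_simp
          nlinarith [mul_le_mul_of_nonneg_right htk₀ hL.le]
  have hB : (1 - r)⁻¹ ≤ 2 := by
    have h12 : (1:ℝ)/2 ≤ 1 - r := by linarith
    have := inv_anti₀ (by norm_num : (0:ℝ) < 1/2) h12
    norm_num at this
    linarith
  have hfinal : r ^ k₀ * (1 - r)⁻¹ ≤ Real.exp (-(c₁ * lam / 2)) * 2 :=
    mul_le_mul hA hB
      (by have h1r : (0:ℝ) < 1 - r := by linarith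
          positivity) (Real.exp_pos _).le
  calc (∑' k, f k) ≤ ∑' k, g k := hstep1
    _ = r ^ k₀ * (1 - r)⁻¹ := hgval
    _ ≤ Real.exp (-(c₁ * lam / 2)) * 2 := hfinal
    _ = 2 * Real.exp (-(c₁ * lam / 2)) := by ring
end
end
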